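/- Let H be a finite connected triangle-free simple graph with at least one edge, let k ≥ 1 be an integer, let H(k) be the join of H with the vertex-disjoint union of k triangles, and let G(k) = KG(H(k)) be the complement of the line graph of H(k). Then χ(G(k)) = cd₂(H(k)) if and only if α(H) ≤ k. -/

import Mathlib

open SimpleGraph

open scoped Classical
set_option linter.unusedSectionVars false
set_option linter.unusedVariables false

/-- `KG H` is the complement of the line graph of `H`: its vertices are the edges of `H`,
two of them being adjacent exactly when the corresponding edges of `H` are disjoint. -/
def KG {V : Type*} (H : SimpleGraph V) : SimpleGraph H.edgeSet where
  Adj e f := e ≠ f ∧ ∀ v, v ∈ (e : Sym2 V) → v ∉ (f : Sym2 V)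
  symm := by
    constructor
    rintro e f ⟨hne, h⟩
    exact ⟨hne.symm, fun v hvf hve => h v hve hvf⟩
  loopless := by
    constructor
    rintro e ⟨hne, -⟩
    exact hne rfl

/-- The chromatic number: least `n` such that `G` has a proper coloring with `n` colors. -/
noncomputable def chromNum {W : Type*} (G : SimpleGraph W) : ℕ :=
  sInf {n | G.Colorable n}

/-- The 2-colorability defect: the minimum number of vertices whose removal
leaves a bipartite (i.e. 2-colorable) induced subgraph. -/
noncomputable def cd2 {V : Type*} (H : SimpleGraph V) : ℕ :=
  sInf {n | ∃ X : Set V, X.ncard = n ∧ (H.induce Xᶜ).Colorable 2}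

/-- The independence number. -/
noncomputable def indepNum {V : Type*} (H : SimpleGraph V) : ℕ :=
  sSup {n | ∃ S : Set V, (∀ u ∈ S, ∀ v ∈ S, ¬ H.Adj u v) ∧ S.ncard = n}

/-- The join of two graphs on disjoint vertex sets: their disjoint union together with
all edges between a vertex of the first and a vertex of the second. -/
def gJoin {V₁ V₂ : Type*} (H₁ : SimpleGraph V₁) (H₂ : SimpleGraph V₂) :
    SimpleGraph (V₁ ⊕ V₂) where
  Adj x y :=
    match x, y with
    | .inl a, .inl b => H₁.Adj a b
    | .inl _, .inr _ => True
    | .inr _, .inl _ => True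
    | .inr a, .inr b => H₂.Adj a b
  symm := by
    constructor
    rintro (a | a) (b | b) h
    · exact h.symm
    · trivial
    · trivial
    · exact h.symm
  loopless := by
    constructor
    rintro (a | a) h
    · exact H₁.loopless.irrefl a h
    · exact H₂.loopless.irrefl a h

/-- The vertex-disjoint union of `k` triangles, on the vertex set `Fin k × Fin 3`. -/
def kTriangles (k : ℕ) : SimpleGraph (Fin k × Fin 3) where
  Adj p q := p.1 = q.1 ∧ p.2 ≠ q.2
  symm := by
    constructor
    rintro p q ⟨h1, h2⟩
    exact ⟨h1.symm, h2.symm⟩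
  loopless := by
    constructor
    rintro p ⟨-, h⟩
    exact h rfl

/-- `Hk H k` is the join of `H` with the vertex-disjoint union of `k` triangles. -/
def Hk {V : Type*} (H : SimpleGraph V) (k : ℕ) : SimpleGraph (V ⊕ Fin k × Fin 3) :=
  gJoin H (kTriangles k)

section aux
variable {V : Type*} [Fintype V] {H : SimpleGraph V}

lemma indep_le_indepNum {S : Set V} (hS : ∀ u ∈ S, ∀ v ∈ S, ¬ H.Adj u v) :
    S.ncard ≤ _root_.indepNum H := by
  apply le_csSup
  · refine ⟨Fintype.card V, ?_⟩
    rintro n ⟨S, -, rfl⟩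
    simpa [Set.ncard_univ, Nat.card_eq_fintype_card] using Set.ncard_le_ncard (Set.subset_univ S) Set.finite_univ
  · exact ⟨S, hS, rfl⟩

lemma findep_le_indepNum {S : Finset V} (hS : ∀ u ∈ S, ∀ v ∈ S, ¬ H.Adj u v) :
    S.card ≤ _root_.indepNum H := by
  have := indep_le_indepNum (H := H) (S := (S : Set V)) (by simpa using hS)
  simpa using this

lemma indepNum_exists (H : SimpleGraph V) :
    ∃ S : Set V, (∀ u ∈ S, ∀ v ∈ S, ¬ H.Adj u v) ∧ S.ncard = _root_.indepNum H := by
  have hne : {n | ∃ S : Set V, (∀ u ∈ S, ∀ v ∈ S, ¬ H.Adj u v) ∧ S.ncard = n}.Nonempty :=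
    ⟨0, ∅, by simp, by simp⟩
  have hbdd : BddAbove {n | ∃ S : Set V, (∀ u ∈ S, ∀ v ∈ S, ¬ H.Adj u v) ∧ S.ncard = n} := by
    refine ⟨Fintype.card V, ?_⟩
    rintro n ⟨S, -, rfl⟩
    simpa [Set.ncard_univ, Nat.card_eq_fintype_card] using Set.ncard_le_ncard (Set.subset_univ S) Set.finite_univ
  exact Nat.sSup_mem hne hbdd

lemma indepNum_le_card (H : SimpleGraph V) : _root_.indepNum H ≤ Fintype.card V := by
  obtain ⟨S, -, hcard⟩ := indepNum_exists H
  rw [← hcard]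
  simpa [Set.ncard_univ, Nat.card_eq_fintype_card] using Set.ncard_le_ncard (Set.subset_univ S) Set.finite_univ

lemma sym2_eq_of_mem_mem {v w : V} {e : Sym2 V} (hv : v ∈ e) (hw : w ∈ e) (hne : v ≠ w) :
    e = s(v, w) := by
  induction e using Sym2.ind with
  | _ a b =>
    rw [Sym2.mem_iff] at hv hw
    rw [Sym2.eq_iff]
    rcases hv with rfl | rfl <;> rcases hw with rfl | rfl <;> tauto

lemma tf_no_triangle (htf : H.CliqueFree 3) {a b c : V}
    (hab : H.Adj a b) (hac : H.Adj a c) (hbc : H.Adj b c) : False := by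
  exact htf {a, b, c} (is3Clique_triple_iff.mpr ⟨hab, hac, hbc⟩)

/-- edges of `H` lying inside a finset `U`. -/
noncomputable def inE (H : SimpleGraph V) (U : Finset V) : Finset (Sym2 V) :=
  H.edgeFinset.filter (fun e => ∀ x ∈ e, x ∈ U)

lemma mem_inE {U : Finset V} {e : Sym2 V} :
    e ∈ inE H U ↔ e ∈ H.edgeFinset ∧ ∀ x ∈ e, x ∈ U := by
  simp [inE]

lemma greedy (H : SimpleGraph V) (U : Finset V) : ∃ S : Finset V, S ⊆ U ∧
    (∀ u ∈ S, ∀ v ∈ S, ¬ H.Adj u v) ∧ U.card ≤ S.card + (inE H U).card := by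
  induction U using Finset.strongInduction with
  | _ U ih =>
    by_cases h : ∀ u ∈ U, ∀ v ∈ U, ¬ H.Adj u v
    · exact ⟨U, subset_rfl, h, by simp⟩
    · push_neg at h
      obtain ⟨u, hu, v, hv, huv⟩ := h
      obtain ⟨S, hSsub, hSind, hcard⟩ := ih (U.erase u) (Finset.erase_ssubset hu)
      refine ⟨S, hSsub.trans (Finset.erase_subset _ _), hSind, ?_⟩
      have h2 : s(u, v) ∈ inE H U := by
        rw [mem_inE]
        refine ⟨by simpa [SimpleGraph.mem_edgeFinset] using huv, ?_⟩
        intro x hx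
        rw [Sym2.mem_iff] at hx
        rcases hx with rfl | rfl <;> assumption
      have h1 : inE H (U.erase u) ⊆ (inE H U).erase s(u, v) := by
        intro e he
        rw [mem_inE] at he
        rw [Finset.mem_erase, mem_inE]
        refine ⟨?_, he.1, fun x hx => Finset.mem_of_mem_erase (he.2 x hx)⟩
        intro hEq
        subst hEq
        have := he.2 u (by simp)
        exact Finset.notMem_erase u U this
      have h3 : (inE H (U.erase u)).card < (inE H U).card := by
        calc (inE H (U.erase u)).card ≤ ((inE H U).erase s(u, v)).card :=
              Finset.card_le_card h1
          _ < (inE H U).card := Finset.card_erase_lt_of_mem h2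
      have h4 : U.card = (U.erase u).card + 1 := by
        rw [Finset.card_erase_of_mem hu]
        have : 1 ≤ U.card := Finset.card_pos.mpr ⟨u, hu⟩
        omega
      omega

lemma greedy_indep (H : SimpleGraph V) (U : Finset V) :
    U.card ≤ _root_.indepNum H + (inE H U).card := by
  obtain ⟨S, -, hind, hcard⟩ := greedy H U
  have := findep_le_indepNum hind
  omega

lemma greedy2 (H : SimpleGraph V) (U : Finset V) (x : V) (hx : x ∈ U) {e f : Sym2 V}
    (he : e ∈ inE H U) (hf : f ∈ inE H U) (hef : e ≠ f) (hxe : x ∈ e) (hxf : x ∈ f) :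
    U.card + 1 ≤ _root_.indepNum H + (inE H U).card := by
  have hkey := greedy_indep H (U.erase x)
  have h1 : inE H (U.erase x) ⊆ ((inE H U).erase e).erase f := by
    intro g hg
    rw [mem_inE] at hg
    rw [Finset.mem_erase, Finset.mem_erase]
    refine ⟨?_, ?_, mem_inE.mpr ⟨hg.1, fun z hz => Finset.mem_of_mem_erase (hg.2 z hz)⟩⟩
    · rintro rfl
      exact Finset.notMem_erase x U (hg.2 x hxf)
    · rintro rfl
      exact Finset.notMem_erase x U (hg.2 x hxe)
  have h2 : (((inE H U).erase e).erase f).card + 2 ≤ (inE H U).card := by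
    rw [Finset.card_erase_of_mem (by rw [Finset.mem_erase]; exact ⟨Ne.symm hef, hf⟩),
        Finset.card_erase_of_mem he]
    have h5 : f ∈ (inE H U).erase e := by rw [Finset.mem_erase]; exact ⟨Ne.symm hef, hf⟩
    have : 1 ≤ ((inE H U).erase e).card := Finset.card_pos.mpr ⟨f, h5⟩
    have : 1 ≤ (inE H U).card := Finset.card_pos.mpr ⟨e, he⟩
    have := Finset.card_erase_of_mem he
    omega
  have h3 := Finset.card_le_card h1
  have h4 : U.card = (U.erase x).card + 1 := by
    rw [Finset.card_erase_of_mem hx]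
    have : 1 ≤ U.card := Finset.card_pos.mpr ⟨x, hx⟩
    omega
  omega

end aux

section aux2
variable {V : Type*} [Fintype V] {H : SimpleGraph V}

/-- From a walk that starts outside `U` and ends inside `U`, extract a crossing edge. -/
lemma exists_crossing {U : Finset V} :
    ∀ {s t : V} (_ : H.Walk s t), s ∉ U → t ∈ U → ∃ y x, y ∉ U ∧ x ∈ U ∧ H.Adj y x := by
  intro s t w
  induction w with
  | nil => intro hs ht; exact absurd ht hs
  | @cons a b c h p ih =>
    intro hs ht
    by_cases hb : b ∈ U
    · exact ⟨a, b, hs, hb, h⟩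
    · exact ih hb ht

/-- closed-neighborhood walk lemma: if every edge at a vertex of `P` stays within `P`,
walks starting in `P` stay in `P`. -/
lemma walk_stays {P : Finset V} (hcl : ∀ p x, p ∈ P → H.Adj p x → x ∈ P) :
    ∀ {s t : V} (_ : H.Walk s t), s ∈ P → t ∈ P := by
  intro s t w
  induction w with
  | nil => exact fun h => h
  | @cons a b c h p ih => intro ha; exact ih (hcl a b ha h)

/-- The matching lemma: if the edges of `H` inside `U` form a perfect matching of `U`
(each vertex of `U` on exactly one such edge), `H` connected and triangle-free with
independence number at least 2, then the independence number is bigger than the matching. -/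
lemma matching_lemma (hconn : H.Connected) (htf : H.CliqueFree 3) (hα : 2 ≤ _root_.indepNum H)
    (U : Finset V) (hUne : U.Nonempty)
    (hcov : ∀ v ∈ U, ∃ e ∈ inE H U, v ∈ e)
    (huni : ∀ x ∈ U, ∀ e ∈ inE H U, ∀ f ∈ inE H U, x ∈ e → x ∈ f → e = f) :
    (inE H U).card + 1 ≤ _root_.indepNum H := by
  set M := inE H U with hM
  by_cases hall : ∀ x : V, x ∈ U
  · -- U is everything; M = all edges; connectivity forces H to be a single edge; contradict hα
    exfalso
    obtain ⟨v₀, hv₀⟩ := hUne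
    obtain ⟨e₀, he₀, hv₀e⟩ := hcov v₀ hv₀
    have hedge : ∀ e ∈ H.edgeFinset, e ∈ M := by
      intro e he
      rw [hM, mem_inE]
      exact ⟨he, fun x _ => hall x⟩
    obtain ⟨a, b, rfl⟩ : ∃ a b, e₀ = s(a, b) := by
      induction e₀ using Sym2.ind with | _ a b => exact ⟨a, b, rfl⟩
    have hab : H.Adj a b := by
      have := (mem_inE.mp he₀).1
      rwa [SimpleGraph.mem_edgeFinset, SimpleGraph.mem_edgeSet] at this
    have hcl : ∀ p x, p ∈ ({a, b} : Finset V) → H.Adj p x → x ∈ ({a, b} : Finset V) := by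
      intro p x hp hpx
      have h1 : s(p, x) ∈ M := hedge _ (by rwa [SimpleGraph.mem_edgeFinset, SimpleGraph.mem_edgeSet])
      have h2 : p ∈ s(a, b) := by
        rw [Sym2.mem_iff]; simpa using hp
      have := huni p (hall p) _ he₀ _ h1 h2 (by simp)
      have hx : x ∈ s(a, b) := by rw [this]; simp
      rw [Sym2.mem_iff] at hx
      simpa using hx
    have hVab : ∀ x : V, x ∈ ({a, b} : Finset V) := by
      intro x
      exact walk_stays hcl ((hconn.preconnected a x).some) (by simp)
    -- independence number ≥ 2 gives two distinct independent vertices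
    obtain ⟨S, hSind, hScard⟩ := indepNum_exists H
    have h2le : 2 ≤ S.ncard := hScard ▸ hα
    obtain ⟨x, hx, y, hy, hxy⟩ : ∃ x ∈ S, ∃ y ∈ S, x ≠ y := by
      have : 1 < S.ncard := h2le
      rw [Set.one_lt_ncard_iff (S.toFinite)] at this
      obtain ⟨x, y, hx, hy, hxy⟩ := this
      exact ⟨x, hx, y, hy, hxy⟩
    have hxab := hVab x
    have hyab := hVab y
    simp only [Finset.mem_insert, Finset.mem_singleton] at hxab hyab
    have : H.Adj x y := by
      rcases hxab with rfl | rfl <;> rcases hyab with rfl | rfl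
      · exact absurd rfl hxy
      · exact hab
      · exact hab.symm
      · exact absurd rfl hxy
    exact hSind x hx y hy this
  · -- there is a vertex outside U; get a crossing edge
    push_neg at hall
    obtain ⟨z, hz⟩ := hall
    obtain ⟨a₀, ha₀⟩ := hUne
    obtain ⟨y, a, hy, ha, hya⟩ := exists_crossing ((hconn.preconnected z a₀).some) hz ha₀
    -- pick for each matching edge an endpoint not adjacent to y
    have hpk : ∀ e ∈ M, ∃ x, x ∈ e ∧ ¬ H.Adj y x ∧ x ∈ U := by
      intro e he
      obtain ⟨p, q, rfl⟩ : ∃ p q, e = s(p, q) := by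
        induction e using Sym2.ind with | _ p q => exact ⟨p, q, rfl⟩
      have hpq : H.Adj p q := by
        have := (mem_inE.mp he).1
        rwa [SimpleGraph.mem_edgeFinset, SimpleGraph.mem_edgeSet] at this
      have hpU : p ∈ U := (mem_inE.mp he).2 p (by simp)
      have hqU : q ∈ U := (mem_inE.mp he).2 q (by simp)
      by_cases hyp : H.Adj y p
      · refine ⟨q, by simp, ?_, hqU⟩
        intro hyq
        exact tf_no_triangle htf hyp hyq hpq
      · exact ⟨p, by simp, hyp, hpU⟩
    set pk : Sym2 V → V := fun e =>
      if h : ∃ x, x ∈ e ∧ ¬ H.Adj y x ∧ x ∈ U then h.choose else y with hpk_def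
    have hpk1 : ∀ e ∈ M, pk e ∈ e ∧ ¬ H.Adj y (pk e) ∧ pk e ∈ U := by
      intro e he
      have h := hpk e he
      rw [hpk_def]
      simp only [dif_pos h]
      exact h.choose_spec
    have hinj : Set.InjOn pk M := by
      intro e he f hf hef
      have h1 := hpk1 e he
      have h2 := hpk1 f hf
      exact huni (pk e) h1.2.2 e he f hf h1.1 (hef ▸ h2.1)
    set S := insert y (M.image pk) with hS
    have hySnot : y ∉ M.image pk := by
      intro hyim
      rw [Finset.mem_image] at hyim
      obtain ⟨e, he, hpe⟩ := hyim
      exact hy (hpe ▸ (hpk1 e he).2.2)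
    have hcard : S.card = M.card + 1 := by
      rw [hS, Finset.card_insert_of_notMem hySnot, Finset.card_image_of_injOn hinj]
    have hind : ∀ u ∈ S, ∀ v ∈ S, ¬ H.Adj u v := by
      intro u hu v hv huv
      rw [hS, Finset.mem_insert] at hu hv
      rcases hu with rfl | hu <;> rcases hv with rfl | hv
      · exact H.loopless.irrefl _ huv
      · rw [Finset.mem_image] at hv
        obtain ⟨e, he, rfl⟩ := hv
        exact (hpk1 e he).2.1 huv
      · rw [Finset.mem_image] at hu
        obtain ⟨e, he, rfl⟩ := hu
        exact (hpk1 e he).2.1 huv.symm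
      · rw [Finset.mem_image] at hu hv
        obtain ⟨e, he, rfl⟩ := hu
        obtain ⟨f, hf, rfl⟩ := hv
        -- adjacent picks give an edge inside U, a vertex on two matching edges
        have hne : pk e ≠ pk f := H.ne_of_adj huv
        have hedge : s(pk e, pk f) ∈ M := by
          rw [hM, mem_inE]
          refine ⟨by rwa [SimpleGraph.mem_edgeFinset, SimpleGraph.mem_edgeSet], ?_⟩
          intro x hx
          rw [Sym2.mem_iff] at hx
          rcases hx with rfl | rfl
          · exact (hpk1 e he).2.2
          · exact (hpk1 f hf).2.2
        have h1 : e = s(pk e, pk f) :=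
          huni (pk e) (hpk1 e he).2.2 e he _ hedge (hpk1 e he).1 (by simp)
        have h2 : f = s(pk e, pk f) :=
          huni (pk f) (hpk1 f hf).2.2 f hf _ hedge (hpk1 f hf).1 (by simp)
        have : e = f := h1.trans h2.symm
        subst this
        exact hne rfl
    have := findep_le_indepNum hind
    omega

end aux2

section aux3
variable {V : Type*} [Fintype V] {H : SimpleGraph V}

/-- The covering lemma: an edge set covering `U` and containing all edges inside `U`
has more than `|U| - α` elements.  -/
lemma coverR (hconn : H.Connected) (htf : H.CliqueFree 3) (hα : 2 ≤ _root_.indepNum H)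
    (U : Finset V) (E' : Finset (Sym2 V)) (hE'sub : E' ⊆ H.edgeFinset)
    (hcov : ∀ v ∈ U, ∃ e ∈ E', v ∈ e) (hinc : inE H U ⊆ E') :
    U.card + 1 ≤ E'.card + _root_.indepNum H := by
  set iso := U.filter (fun v => ∀ e ∈ inE H U, v ∉ e) with hiso_def
  have hisoE : iso.card + (inE H U).card ≤ E'.card := by
    have hg : ∀ v ∈ iso, ∃ e ∈ E' \ inE H U, v ∈ e := by
      intro v hv
      rw [hiso_def, Finset.mem_filter] at hv
      obtain ⟨e, he, hve⟩ := hcov v hv.1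
      refine ⟨e, ?_, hve⟩
      rw [Finset.mem_sdiff]
      exact ⟨he, fun hmem => hv.2 e hmem hve⟩
    set g : V → Sym2 V := fun v => if h : ∃ e ∈ E' \ inE H U, v ∈ e then h.choose else s(v, v)
      with hg_def
    have hg1 : ∀ v ∈ iso, g v ∈ E' \ inE H U ∧ v ∈ g v := by
      intro v hv
      have h := hg v hv
      rw [hg_def]
      simp only [dif_pos h]
      exact h.choose_spec
    have hinj : Set.InjOn g iso := by
      intro v hv w hw hvw
      by_contra hne
      have h1 := hg1 v hv
      have h2 := hg1 w hw
      have hvU : v ∈ U := (Finset.mem_filter.mp hv).1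
      have hwU : w ∈ U := (Finset.mem_filter.mp hw).1
      have : g v = s(v, w) := sym2_eq_of_mem_mem h1.2 (hvw ▸ h2.2) hne
      have hmem : g v ∈ inE H U := by
        rw [mem_inE]
        refine ⟨hE'sub (Finset.mem_sdiff.mp h1.1).1, ?_⟩
        intro x hx
        rw [this, Sym2.mem_iff] at hx
        rcases hx with rfl | rfl <;> assumption
      exact (Finset.mem_sdiff.mp h1.1).2 hmem
    have h1 : iso.card ≤ (E' \ inE H U).card :=
      Finset.card_le_card_of_injOn g (fun v hv => (hg1 v hv).1) hinj
    have h2 : (E' \ inE H U).card + (inE H U).card = E'.card :=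
      Finset.card_sdiff_add_card_eq_card hinc
    omega
  by_cases hiso : iso.Nonempty
  · -- some isolated vertex
    set U' := U \ iso with hU'_def
    obtain ⟨S, hSsub, hSind, hScard⟩ := greedy H U'
    have hinE' : inE H U' ⊆ inE H U := by
      intro e he
      rw [mem_inE] at he ⊢
      exact ⟨he.1, fun x hx => (Finset.mem_sdiff.mp (he.2 x hx)).1⟩
    have hbig : ∀ w ∈ iso, ∀ x ∈ U, ¬ H.Adj w x := by
      intro w hw x hx hadj
      have hwU : w ∈ U := (Finset.mem_filter.mp hw).1
      have hmem : s(w, x) ∈ inE H U := by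
        rw [mem_inE]
        refine ⟨by rwa [SimpleGraph.mem_edgeFinset, SimpleGraph.mem_edgeSet], ?_⟩
        intro z hz
        rw [Sym2.mem_iff] at hz
        rcases hz with rfl | rfl <;> assumption
      exact (Finset.mem_filter.mp hw).2 _ hmem (by simp)
    have hdisj : Disjoint S iso := by
      rw [Finset.disjoint_left]
      intro x hxS hxiso
      have := hSsub hxS
      rw [hU'_def, Finset.mem_sdiff] at this
      exact this.2 hxiso
    have hindall : ∀ u ∈ S ∪ iso, ∀ v ∈ S ∪ iso, ¬ H.Adj u v := by
      intro u hu v hv huv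
      rw [Finset.mem_union] at hu hv
      have hSU : ∀ x ∈ S, x ∈ U := fun x hx => (Finset.mem_sdiff.mp (hSsub hx)).1
      rcases hu with hu | hu <;> rcases hv with hv | hv
      · exact hSind u hu v hv huv
      · exact hbig v hv u (hSU u hu) huv.symm
      · exact hbig u hu v (hSU v hv) huv
      · exact hbig u hu v (Finset.mem_filter.mp hv).1 huv
    have hcardind := findep_le_indepNum hindall
    rw [Finset.card_union_of_disjoint hdisj] at hcardind
    have hUcard : U.card = U'.card + iso.card := by
      rw [hU'_def]
      have : iso ⊆ U := Finset.filter_subset _ _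
      rw [Finset.card_sdiff_of_subset this]
      have := Finset.card_le_card this
      omega
    have h3 := Finset.card_le_card hinE'
    obtain ⟨w, hw⟩ := hiso
    have : 1 ≤ iso.card := Finset.card_pos.mpr ⟨w, hw⟩
    omega
  · -- no isolated vertex
    have hcov' : ∀ v ∈ U, ∃ e ∈ inE H U, v ∈ e := by
      intro v hv
      by_contra hne
      push_neg at hne
      exact hiso ⟨v, Finset.mem_filter.mpr ⟨hv, hne⟩⟩
    by_cases hdeg : ∃ x ∈ U, ∃ e ∈ inE H U, ∃ f ∈ inE H U, e ≠ f ∧ x ∈ e ∧ x ∈ f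
    · obtain ⟨x, hx, e, he, f, hf, hef, hxe, hxf⟩ := hdeg
      have := greedy2 H U x hx he hf hef hxe hxf
      have := Finset.card_le_card hinc
      omega
    · push_neg at hdeg
      have huni : ∀ x ∈ U, ∀ e ∈ inE H U, ∀ f ∈ inE H U, x ∈ e → x ∈ f → e = f := by
        intro x hx e he f hf hxe hxf
        by_contra hne
        exact hdeg x hx e he f hf hne hxe hxf
      rcases U.eq_empty_or_nonempty with rfl | hUne
      · simp only [Finset.card_empty]
        omega
      have hml := matching_lemma hconn htf hα U hUne hcov' huni
      -- double counting: U.card = 2 * (inE H U).card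
      have hone : ∀ v ∈ U, ((inE H U).filter (fun e => v ∈ e)).card = 1 := by
        intro v hv
        obtain ⟨e, he, hve⟩ := hcov' v hv
        rw [Finset.card_eq_one]
        refine ⟨e, ?_⟩
        ext g
        rw [Finset.mem_filter, Finset.mem_singleton]
        constructor
        · rintro ⟨hg, hvg⟩
          exact huni v hv g hg e he hvg hve
        · rintro rfl
          exact ⟨he, hve⟩
      have htwo : ∀ e ∈ inE H U, (U.filter (fun v => v ∈ e)).card = 2 := by
        intro e he
        obtain ⟨a, b, rfl⟩ : ∃ a b, e = s(a, b) := by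
          induction e using Sym2.ind with | _ a b => exact ⟨a, b, rfl⟩
        have hab : H.Adj a b := by
          have := (mem_inE.mp he).1
          rwa [SimpleGraph.mem_edgeFinset, SimpleGraph.mem_edgeSet] at this
        have haU : a ∈ U := (mem_inE.mp he).2 a (by simp)
        have hbU : b ∈ U := (mem_inE.mp he).2 b (by simp)
        have : U.filter (fun v => v ∈ s(a, b)) = {a, b} := by
          ext x
          rw [Finset.mem_filter, Finset.mem_insert, Finset.mem_singleton, Sym2.mem_iff]
          constructor
          · rintro ⟨-, h⟩; exact h
          · rintro (rfl | rfl) <;> simp [haU, hbU]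
        rw [this, Finset.card_insert_of_notMem (by simpa using H.ne_of_adj hab),
          Finset.card_singleton]
      have hdouble : U.card = 2 * (inE H U).card := by
        calc U.card = ∑ v ∈ U, 1 := (Finset.card_eq_sum_ones U)
          _ = ∑ v ∈ U, ((inE H U).filter (fun e => v ∈ e)).card :=
              (Finset.sum_congr rfl (fun v hv => (hone v hv).symm))
          _ = ∑ v ∈ U, ∑ e ∈ inE H U, if v ∈ e then 1 else 0 := by
              refine Finset.sum_congr rfl (fun v _ => ?_)
              rw [Finset.card_filter]
          _ = ∑ e ∈ inE H U, ∑ v ∈ U, if v ∈ e then 1 else 0 := Finset.sum_comm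
          _ = ∑ e ∈ inE H U, (U.filter (fun v => v ∈ e)).card := by
              refine Finset.sum_congr rfl (fun e _ => ?_)
              rw [Finset.card_filter]
          _ = ∑ e ∈ inE H U, 2 := (Finset.sum_congr rfl htwo)
          _ = 2 * (inE H U).card := by rw [Finset.sum_const]; ring
      have := Finset.card_le_card hinc
      omega

end aux3

section hk
variable {V : Type*} [Fintype V] {H : SimpleGraph V} {k : ℕ}

lemma Hk_adj_ll {u v : V} : (Hk H k).Adj (Sum.inl u) (Sum.inl v) ↔ H.Adj u v := Iff.rfl

lemma Hk_adj_lr {v : V} {t : Fin k × Fin 3} : (Hk H k).Adj (Sum.inl v) (Sum.inr t) := trivial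

lemma Hk_adj_rl {v : V} {t : Fin k × Fin 3} : (Hk H k).Adj (Sum.inr t) (Sum.inl v) := trivial

lemma Hk_adj_rr {t t' : Fin k × Fin 3} :
    (Hk H k).Adj (Sum.inr t) (Sum.inr t') ↔ t.1 = t'.1 ∧ t.2 ≠ t'.2 := Iff.rfl

lemma card_W : Fintype.card (V ⊕ Fin k × Fin 3) = Fintype.card V + 3 * k := by
  simp [Fintype.card_sum, Fintype.card_prod]
  ring

end hk

section cd2sec
variable {V : Type*} [Fintype V] {H : SimpleGraph V} {k : ℕ}

/-- first coloring pattern for removals -/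
private def col1 : (V ⊕ Fin k × Fin 3) → Fin 2
  | .inl _ => 0
  | .inr (_, j) => if j = 1 then 0 else 1

lemma cd2_le_one : cd2 (Hk H k) ≤ Fintype.card V + k := by
  classical
  set Xf : Finset (V ⊕ Fin k × Fin 3) :=
    (Finset.univ.image Sum.inl) ∪
      (Finset.univ.image (fun i : Fin k => Sum.inr (i, (0 : Fin 3)))) with hXf
  have hdisj : Disjoint (Finset.univ.image (Sum.inl : V → V ⊕ Fin k × Fin 3))
      (Finset.univ.image (fun i : Fin k => Sum.inr (i, (0 : Fin 3)))) := by
    rw [Finset.disjoint_left]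
    rintro x hx hx'
    rw [Finset.mem_image] at hx hx'
    obtain ⟨v, -, rfl⟩ := hx
    obtain ⟨i, -, h⟩ := hx'
    exact nomatch h
  have hcard : Xf.card = Fintype.card V + k := by
    rw [hXf, Finset.card_union_of_disjoint hdisj, Finset.card_image_of_injective _ Sum.inl_injective,
      Finset.card_image_of_injective]
    · simp
    · intro i j h
      simpa using h
  have hmem1 : ∀ v : V, Sum.inl v ∈ Xf := by
    intro v; rw [hXf]; simp
  have hmem2 : ∀ i : Fin k, Sum.inr (i, (0 : Fin 3)) ∈ (Xf : Finset _) := by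
    intro i; rw [hXf]
    apply Finset.mem_union_right
    simp
  have hcol : ((Hk H k).induce (↑Xf : Set (V ⊕ Fin k × Fin 3))ᶜ).Colorable 2 := by
    refine ⟨SimpleGraph.Coloring.mk (fun a => col1 a.1) ?_⟩
    rintro ⟨a, ha⟩ ⟨b, hb⟩ hadj
    simp only [Set.mem_compl_iff, Finset.mem_coe] at ha hb
    match a, b with
    | .inl v, _ => exact absurd (hmem1 v) ha
    | .inr t, .inl v => exact absurd (hmem1 v) hb
    | .inr (i, j), .inr (i', j') =>
      have hadj' : i = i' ∧ j ≠ j' := hadj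
      obtain ⟨rfl, hne⟩ := hadj'
      have hj : j ≠ 0 := by rintro rfl; exact ha (hmem2 i)
      have hj' : j' ≠ 0 := by rintro rfl; exact hb (hmem2 i)
      simp only [col1, ne_eq]
      fin_cases j <;> fin_cases j' <;> simp_all
  apply Nat.sInf_le
  exact ⟨(↑Xf : Set (V ⊕ Fin k × Fin 3)), by rw [Set.ncard_coe_finset, hcard], hcol⟩

private def col2 : (V ⊕ Fin k × Fin 3) → Fin 2
  | .inl _ => 0
  | .inr _ => 1

lemma cd2_le_two : cd2 (Hk H k) + _root_.indepNum H ≤ Fintype.card V + 2 * k := by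
  classical
  obtain ⟨S, hSind, hScard⟩ := indepNum_exists H
  set Sf : Finset V := S.toFinset with hSf
  have hSfcard : Sf.card = _root_.indepNum H := by
    rw [hSf, ← Set.ncard_eq_toFinset_card' S, hScard]
  set Xf : Finset (V ⊕ Fin k × Fin 3) :=
    ((Finset.univ \ Sf).image Sum.inl) ∪
      ((Finset.univ : Finset (Fin k × Fin 3)).filter (fun t => t.2 ≠ 0)).image Sum.inr with hXf
  have hcard : Xf.card = (Fintype.card V - _root_.indepNum H) + 2 * k := by
    rw [hXf, Finset.card_union_of_disjoint, Finset.card_image_of_injective _ Sum.inl_injective,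
      Finset.card_image_of_injective _ Sum.inr_injective]
    · congr 1
      · rw [Finset.card_sdiff_of_subset (Finset.subset_univ Sf), hSfcard, Finset.card_univ]
      · have h3 : (∑ j : Fin 3, if j ≠ (0 : Fin 3) then (1 : ℕ) else 0) = 2 := by decide
        rw [Finset.card_filter, ← Finset.univ_product_univ, Finset.sum_product]
        simp only [h3, Finset.sum_const, smul_eq_mul, Finset.card_univ, Fintype.card_fin]
        ring
    · rw [Finset.disjoint_left]
      rintro x hx hx'
      rw [Finset.mem_image] at hx hx'
      obtain ⟨v, -, rfl⟩ := hx
      obtain ⟨i, -, h⟩ := hx'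
      exact nomatch h
  have hmem1 : ∀ v : V, v ∉ Sf → Sum.inl v ∈ Xf := by
    intro v hv; rw [hXf]
    apply Finset.mem_union_left
    exact Finset.mem_image_of_mem _ (by simp [hv])
  have hmem2 : ∀ t : Fin k × Fin 3, t.2 ≠ 0 → Sum.inr t ∈ Xf := by
    intro t ht; rw [hXf]
    apply Finset.mem_union_right
    exact Finset.mem_image_of_mem _ (by simp [ht])
  have hcol : ((Hk H k).induce (↑Xf : Set (V ⊕ Fin k × Fin 3))ᶜ).Colorable 2 := by
    refine ⟨SimpleGraph.Coloring.mk (fun a => col2 a.1) ?_⟩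
    rintro ⟨a, ha⟩ ⟨b, hb⟩ hadj
    simp only [Set.mem_compl_iff, Finset.mem_coe] at ha hb
    match a, b with
    | .inl u, .inl v =>
      have huS : u ∈ Sf := by by_contra h; exact ha (hmem1 u h)
      have hvS : v ∈ Sf := by by_contra h; exact hb (hmem1 v h)
      rw [hSf, Set.mem_toFinset] at huS hvS
      exact absurd (show H.Adj u v from hadj) (hSind u huS v hvS)
    | .inl v, .inr t => simp [col2]
    | .inr t, .inl v => simp [col2]
    | .inr t, .inr t' =>
      have ht : t.2 = 0 := by by_contra h; exact ha (hmem2 t h)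
      have ht' : t'.2 = 0 := by by_contra h; exact hb (hmem2 t' h)
      have h2 : t.1 = t'.1 ∧ t.2 ≠ t'.2 := hadj
      exact absurd (ht.trans ht'.symm) h2.2
  have hle : cd2 (Hk H k) ≤ (Fintype.card V - _root_.indepNum H) + 2 * k := by
    apply Nat.sInf_le
    exact ⟨(↑Xf : Set (V ⊕ Fin k × Fin 3)), by rw [Set.ncard_coe_finset, hcard], hcol⟩
  have := indepNum_le_card H
  omega

end cd2sec

section cd2low
variable {V : Type*} [Fintype V] {H : SimpleGraph V} {k : ℕ}

lemma cd2_lower (hα : _root_.indepNum H ≤ k) : Fintype.card V + k ≤ cd2 (Hk H k) := by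
  classical
  apply le_csInf
  · exact ⟨Fintype.card V + 3 * k,
      (Set.univ : Set (V ⊕ Fin k × Fin 3)),
      by rw [Set.ncard_univ, Nat.card_eq_fintype_card, card_W], by
        refine ⟨SimpleGraph.Coloring.mk (fun a => 0) ?_⟩
        rintro ⟨a, ha⟩
        simp at ha⟩
  rintro x ⟨X, rfl, hcol⟩
  obtain ⟨g⟩ := hcol
  set R := Xᶜ with hR
  -- no triangle may survive in R
  have hnotri : ∀ x y z : V ⊕ Fin k × Fin 3, ∀ (hx : x ∈ R) (hy : y ∈ R) (hz : z ∈ R),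
      (Hk H k).Adj x y → (Hk H k).Adj x z → (Hk H k).Adj y z → False := by
    intro x y z hx hy hz hxy hxz hyz
    have v1 := g.valid (show ((Hk H k).induce R).Adj ⟨x, hx⟩ ⟨y, hy⟩ from hxy)
    have v2 := g.valid (show ((Hk H k).induce R).Adj ⟨x, hx⟩ ⟨z, hz⟩ from hxz)
    have v3 := g.valid (show ((Hk H k).induce R).Adj ⟨y, hy⟩ ⟨z, hz⟩ from hyz)
    have := (g ⟨x, hx⟩).isLt
    have := (g ⟨y, hy⟩).isLt
    have := (g ⟨z, hz⟩).isLt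
    rw [Fin.ne_iff_vne] at v1 v2 v3
    omega
  have hT2 : ∀ i : Fin k, ¬(Sum.inr (i, 0) ∈ R ∧ Sum.inr (i, 1) ∈ R ∧ Sum.inr (i, 2) ∈ R) := by
    rintro i ⟨h0, h1, h2⟩
    exact hnotri (Sum.inr (i, 0)) (Sum.inr (i, 1)) (Sum.inr (i, 2)) h0 h1 h2
      ⟨rfl, show (0 : Fin 3) ≠ 1 by decide⟩ ⟨rfl, show (0 : Fin 3) ≠ 2 by decide⟩
      ⟨rfl, show (1 : Fin 3) ≠ 2 by decide⟩
  have hHedge : ∀ u v : V, H.Adj u v → Sum.inl u ∈ R → Sum.inl v ∈ R →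
      ∀ t : Fin k × Fin 3, Sum.inr t ∉ R := by
    intro u v huv hu hv t ht
    exact hnotri _ _ _ hu hv ht huv Hk_adj_lr Hk_adj_lr
  have hmix : ∀ (v : V) (t t' : Fin k × Fin 3), t.1 = t'.1 → t.2 ≠ t'.2 →
      Sum.inl v ∈ R → Sum.inr t ∈ R → Sum.inr t' ∈ R → False := by
    intro v t t' h1 h2 hv ht ht'
    exact hnotri _ _ _ hv ht ht' Hk_adj_lr Hk_adj_lr ⟨h1, h2⟩
  -- counting
  set RHf : Finset V := Finset.univ.filter (fun v => Sum.inl v ∈ R) with hRHf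
  set RTf : Finset (Fin k × Fin 3) := Finset.univ.filter (fun t => Sum.inr t ∈ R) with hRTf
  have hsplit : R.toFinset.card = RHf.card + RTf.card := by
    have : R.toFinset = RHf.image Sum.inl ∪ RTf.image Sum.inr := by
      ext w
      rw [Set.mem_toFinset, Finset.mem_union, Finset.mem_image, Finset.mem_image]
      constructor
      · intro hw
        match w with
        | .inl v => exact Or.inl ⟨v, by simp [hRHf, hw], rfl⟩
        | .inr t => exact Or.inr ⟨t, by simp [hRTf, hw], rfl⟩
      · rintro (⟨v, hv, rfl⟩ | ⟨t, ht, rfl⟩)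
        · rw [hRHf] at hv; simpa using (Finset.mem_filter.mp hv).2
        · rw [hRTf] at ht; simpa using (Finset.mem_filter.mp ht).2
    rw [this, Finset.card_union_of_disjoint, Finset.card_image_of_injective _ Sum.inl_injective,
      Finset.card_image_of_injective _ Sum.inr_injective]
    rw [Finset.disjoint_left]
    rintro w hw hw'
    rw [Finset.mem_image] at hw hw'
    obtain ⟨v, -, rfl⟩ := hw
    obtain ⟨t, -, h⟩ := hw'
    exact nomatch h
  -- block fibers
  have hfiber : RTf.card = ∑ i : Fin k, (RTf.filter (fun t => t.1 = i)).card :=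
    Finset.card_eq_sum_card_fiberwise (fun t _ => Finset.mem_univ t.1)
  have hsub3 : ∀ i : Fin k, RTf.filter (fun t => t.1 = i) ⊆ {(i, 0), (i, 1), (i, 2)} := by
    intro i t ht
    rw [Finset.mem_filter] at ht
    obtain ⟨t1, t2⟩ := t
    obtain rfl : t1 = i := ht.2
    fin_cases t2 <;> simp
  have hbound2 : ∀ i : Fin k, (RTf.filter (fun t => t.1 = i)).card ≤ 2 := by
    intro i
    by_contra hgt
    push_neg at hgt
    have h3 : ({(i, 0), (i, 1), (i, 2)} : Finset (Fin k × Fin 3)).card = 3 := by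
      rw [Finset.card_insert_of_notMem (by simp), Finset.card_insert_of_notMem (by simp),
        Finset.card_singleton]
    have heq : RTf.filter (fun t => t.1 = i) = {(i, 0), (i, 1), (i, 2)} := by
      apply Finset.eq_of_subset_of_card_le (hsub3 i)
      omega
    have hmem : ∀ j : Fin 3, (i, j) ∈ RTf.filter (fun t => t.1 = i) := by
      intro j; rw [heq]; fin_cases j <;> simp
    have m0 := (Finset.mem_filter.mp (hmem 0)).1
    have m1 := (Finset.mem_filter.mp (hmem 1)).1
    have m2 := (Finset.mem_filter.mp (hmem 2)).1
    rw [hRTf, Finset.mem_filter] at m0 m1 m2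
    exact hT2 i ⟨m0.2, m1.2, m2.2⟩
  -- main bound : R.toFinset.card ≤ 2 * k
  have hmain : R.toFinset.card ≤ 2 * k := by
    rcases Finset.eq_empty_or_nonempty RTf with hRT | ⟨t0, ht0⟩
    · -- no triangle part left: RHf splits into two independent sets
      have hC : ∀ c : Fin 2, ∀ u ∈ RHf.filter (fun v => ∃ h : Sum.inl v ∈ R, g ⟨_, h⟩ = c),
          ∀ v ∈ RHf.filter (fun v => ∃ h : Sum.inl v ∈ R, g ⟨_, h⟩ = c), ¬H.Adj u v := by
        intro c u hu v hv hadj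
        rw [Finset.mem_filter] at hu hv
        obtain ⟨-, hu2, hu3⟩ := hu
        obtain ⟨-, hv2, hv3⟩ := hv
        have := g.valid (show ((Hk H k).induce R).Adj ⟨Sum.inl u, hu2⟩ ⟨Sum.inl v, hv2⟩ from hadj)
        rw [hu3, hv3] at this
        exact this rfl
      have hcover : RHf ⊆ (RHf.filter (fun v => ∃ h : Sum.inl v ∈ R, g ⟨_, h⟩ = 0)) ∪
          (RHf.filter (fun v => ∃ h : Sum.inl v ∈ R, g ⟨_, h⟩ = 1)) := by
        intro v hv
        have hv2 : Sum.inl v ∈ R := by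
          rw [hRHf, Finset.mem_filter] at hv; exact hv.2
        have hlt := (g ⟨Sum.inl v, hv2⟩).isLt
        have hor : (g ⟨Sum.inl v, hv2⟩ : Fin 2).val = 0 ∨ (g ⟨Sum.inl v, hv2⟩ : Fin 2).val = 1 := by
          omega
        rcases hor with h | h
        · exact Finset.mem_union_left _ (Finset.mem_filter.mpr ⟨hv, hv2, Fin.ext h⟩)
        · exact Finset.mem_union_right _ (Finset.mem_filter.mpr ⟨hv, hv2, Fin.ext h⟩)
      have h0 := findep_le_indepNum (hC 0)
      have h1 := findep_le_indepNum (hC 1)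
      have := (Finset.card_le_card hcover).trans (Finset.card_union_le _ _)
      rw [hRT] at hsplit
      simp only [Finset.card_empty] at hsplit
      omega
    · -- some triangle vertex remains
      rw [Finset.mem_filter] at ht0
      have hRHind : ∀ u ∈ RHf, ∀ v ∈ RHf, ¬H.Adj u v := by
        intro u hu v hv hadj
        rw [hRHf, Finset.mem_filter] at hu hv
        exact hHedge u v hadj hu.2 hv.2 t0 ht0.2
      have hRHle := findep_le_indepNum hRHind
      rcases Finset.eq_empty_or_nonempty RHf with hRH | ⟨v0, hv0⟩
      · have : RTf.card ≤ 2 * k := by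
          rw [hfiber]
          calc ∑ i : Fin k, (RTf.filter (fun t => t.1 = i)).card ≤ ∑ i : Fin k, 2 :=
              Finset.sum_le_sum (fun i _ => hbound2 i)
            _ = 2 * k := by rw [Finset.sum_const]; simp [mul_comm]
        rw [hRH] at hsplit
        simp only [Finset.card_empty] at hsplit
        omega
      · rw [hRHf, Finset.mem_filter] at hv0
        have hbound1 : ∀ i : Fin k, (RTf.filter (fun t => t.1 = i)).card ≤ 1 := by
          intro i
          rw [Finset.card_le_one]
          intro s hs t ht
          rw [Finset.mem_filter] at hs ht
          by_contra hne
          have hs2 : Sum.inr s ∈ R := by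
            have := hs.1; rw [hRTf, Finset.mem_filter] at this; exact this.2
          have ht2 : Sum.inr t ∈ R := by
            have := ht.1; rw [hRTf, Finset.mem_filter] at this; exact this.2
          have hfst : s.1 = t.1 := by rw [hs.2, ht.2]
          have hsnd : s.2 ≠ t.2 := by
            intro h
            exact hne (Prod.ext hfst h)
          exact hmix v0 s t hfst hsnd hv0.2 hs2 ht2
        have hRTle : RTf.card ≤ k := by
          rw [hfiber]
          calc ∑ i : Fin k, (RTf.filter (fun t => t.1 = i)).card ≤ ∑ i : Fin k, 1 :=
              Finset.sum_le_sum (fun i _ => hbound1 i)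
            _ = k := by simp
        omega
  -- conclude
  have hcompl : X.ncard + R.ncard = Fintype.card V + 3 * k := by
    rw [hR]
    rw [Set.ncard_add_ncard_compl X]
    rw [Nat.card_eq_fintype_card, card_W]
  have hRcard : R.ncard = R.toFinset.card := Set.ncard_eq_toFinset_card' R
  omega

end cd2low

section chromup
variable {V : Type*} [Fintype V] {H : SimpleGraph V} {k : ℕ}

lemma edge_cases (G : SimpleGraph (V ⊕ Fin k × Fin 3)) (e : G.edgeSet) :
    ∃ x y, G.Adj x y ∧ (e : Sym2 (V ⊕ Fin k × Fin 3)) = s(x, y) := by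
  obtain ⟨e, he⟩ := e
  induction e using Sym2.ind with
  | _ x y => exact ⟨x, y, (SimpleGraph.mem_edgeSet G).mp he, rfl⟩

lemma chrom_upper : chromNum (KG (Hk H k)) ≤ Fintype.card V + k := by
  classical
  have hex : ∀ e : (Hk H k).edgeSet, ¬(∃ v : V, Sum.inl v ∈ (e : Sym2 (V ⊕ Fin k × Fin 3))) →
      ∃ t : Fin k × Fin 3, Sum.inr t ∈ (e : Sym2 (V ⊕ Fin k × Fin 3)) := by
    intro e hno
    obtain ⟨x, y, hadj, hxy⟩ := edge_cases _ e
    match x, hadj, hxy with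
    | .inl v, hadj, hxy => exact absurd ⟨v, by rw [hxy]; simp⟩ hno
    | .inr t, hadj, hxy => exact ⟨t, by rw [hxy]; simp⟩
  set ecol : (Hk H k).edgeSet → V ⊕ Fin k := fun e =>
    if h : ∃ v : V, Sum.inl v ∈ (e : Sym2 (V ⊕ Fin k × Fin 3)) then Sum.inl h.choose
    else Sum.inr (hex e h).choose.1 with hecol
  have P1 : ∀ e v, ecol e = Sum.inl v → Sum.inl v ∈ (e : Sym2 (V ⊕ Fin k × Fin 3)) := by
    intro e v hv
    rw [hecol] at hv
    simp only at hv
    by_cases h : ∃ v : V, Sum.inl v ∈ (e : Sym2 (V ⊕ Fin k × Fin 3))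
    · rw [dif_pos h] at hv
      obtain rfl : h.choose = v := Sum.inl_injective hv
      exact h.choose_spec
    · rw [dif_neg h] at hv
      exact nomatch hv
  have P2 : ∀ e i, ecol e = Sum.inr i →
      ∀ x ∈ (e : Sym2 (V ⊕ Fin k × Fin 3)), ∃ j, x = Sum.inr (i, j) := by
    intro e i hi x hx
    have hnol : ¬∃ v : V, Sum.inl v ∈ (e : Sym2 (V ⊕ Fin k × Fin 3)) := by
      intro h
      rw [hecol] at hi
      simp only [dif_pos h] at hi
      exact nomatch hi
    rw [hecol] at hi
    simp only [dif_neg hnol] at hi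
    set c := (hex e hnol).choose with hc
    have hi' : c.1 = i := Sum.inr_injective hi
    have hspec : Sum.inr c ∈ (e : Sym2 (V ⊕ Fin k × Fin 3)) := (hex e hnol).choose_spec
    obtain ⟨a, b, hadj, hab⟩ := edge_cases _ e
    match a, b, hadj, hab with
    | .inl v, b, hadj, hab => exact absurd ⟨v, by rw [hab]; simp⟩ hnol
    | .inr t, .inl v, hadj, hab => exact absurd ⟨v, by rw [hab]; simp⟩ hnol
    | .inr t, .inr t', hadj, hab =>
      have hblk : t.1 = t'.1 := (Hk_adj_rr.mp hadj).1
      have hchoose : c = t ∨ c = t' := by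
        rw [hab, Sym2.mem_iff] at hspec
        rcases hspec with h | h
        · exact Or.inl (Sum.inr_injective h)
        · exact Or.inr (Sum.inr_injective h)
      have hti : t.1 = i ∧ t'.1 = i := by
        rcases hchoose with h | h
        · exact ⟨by rw [← hi', h], by rw [← hblk, ← hi', h]⟩
        · exact ⟨by rw [hblk, ← hi', h], by rw [← hi', h]⟩
      rw [hab, Sym2.mem_iff] at hx
      rcases hx with rfl | rfl
      · refine ⟨t.2, ?_⟩
        obtain ⟨t1, t2⟩ := t
        obtain rfl : t1 = i := hti.1
        rfl
      · refine ⟨t'.2, ?_⟩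
        obtain ⟨t1, t2⟩ := t'
        obtain rfl : t1 = i := hti.2
        rfl
  have hvalid : ∀ {e f}, (KG (Hk H k)).Adj e f → ecol e ≠ ecol f := by
    intro e f hadj heq
    obtain ⟨hne, hdisj⟩ := hadj
    match hce : ecol e with
    | .inl v =>
      have h1 := P1 e v hce
      have h2 := P1 f v (heq.symm.trans hce)
      exact hdisj _ h1 h2
    | .inr i =>
      have h1 := P2 e i hce
      have h2 := P2 f i (heq.symm.trans hce)
      obtain ⟨a, b, hadjE, habE⟩ := edge_cases _ e
      obtain ⟨c, d, hadjF, hcdF⟩ := edge_cases _ f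
      obtain ⟨j1, ha'⟩ := h1 a (by rw [habE]; simp)
      obtain ⟨j2, hb'⟩ := h1 b (by rw [habE]; simp)
      obtain ⟨j3, hc'⟩ := h2 c (by rw [hcdF]; simp)
      obtain ⟨j4, hd'⟩ := h2 d (by rw [hcdF]; simp)
      subst ha' hb' hc' hd'
      have h12 : j1 ≠ j2 := (Hk_adj_rr.mp hadjE).2
      have h34 : j3 ≠ j4 := (Hk_adj_rr.mp hadjF).2
      have hmemE1 : (Sum.inr (i, j1) : V ⊕ Fin k × Fin 3) ∈ (e : Sym2 _) := by rw [habE]; simp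
      have hmemE2 : (Sum.inr (i, j2) : V ⊕ Fin k × Fin 3) ∈ (e : Sym2 _) := by rw [habE]; simp
      have hd1 := hdisj _ hmemE1
      have hd2 := hdisj _ hmemE2
      rw [hcdF, Sym2.mem_iff] at hd1 hd2
      push_neg at hd1 hd2
      have h13 : j1 ≠ j3 := fun h => hd1.1 (by rw [h])
      have h14 : j1 ≠ j4 := fun h => hd1.2 (by rw [h])
      have h23 : j2 ≠ j3 := fun h => hd2.1 (by rw [h])
      have h24 : j2 ≠ j4 := fun h => hd2.2 (by rw [h])
      rw [Fin.ne_iff_vne] at h12 h34 h13 h14 h23 h24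
      have := j1.isLt
      have := j2.isLt
      have := j3.isLt
      have := j4.isLt
      omega
  have hcolor : (KG (Hk H k)).Coloring (V ⊕ Fin k) := SimpleGraph.Coloring.mk ecol hvalid
  have hcolorable : (KG (Hk H k)).Colorable (Fintype.card (V ⊕ Fin k)) := hcolor.colorable
  rw [Fintype.card_sum, Fintype.card_fin] at hcolorable
  exact Nat.sInf_le hcolorable
end chromup

section arith

lemma arith_core (n k α u A a b c m : ℕ) (hk : 1 ≤ k) (hnu : u ≤ n)
    (hm : (n - u) + A + a + b + c ≤ m)
    (hS1 : 3*k*u ≤ u*A + 2*b + 2*c)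
    (hS2 : 3*k ≤ 2*A + 3*a + b)
    (hS3 : u ≤ c + α)
    (hS4 : b = 0 → A < 3*k → 1 ≤ u → 2 ≤ α → u + 1 ≤ c + α) :
    (α ≤ k → n + k ≤ m) ∧ (k < α → n + 2*k + 1 ≤ m + α) := by
  by_cases hA : 3*k ≤ A
  · constructor <;> intro hα <;> omega
  · push_neg at hA
    by_cases hu0 : u = 0
    · subst hu0
      constructor <;> intro hα <;> omega
    by_cases hu1 : u = 1
    · subst hu1
      constructor <;> intro hα <;> omega
    -- u ≥ 2
    have hu2 : 2 ≤ u := by omega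
    by_cases hA1 : A + 1 = 3*k
    · -- d = 1
      have h1 : u*A + u ≤ u*A + (2*b + 2*c) := by
        calc u*A + u = (A+1)*u := by ring
          _ = 3*k*u := by rw [hA1]
          _ ≤ u*A + (2*b + 2*c) := by omega
      have h2 : u ≤ 2*b + 2*c := Nat.le_of_add_le_add_left h1
      constructor
      · intro hα
        omega
      · intro hα
        by_cases hk1 : k = 1
        · subst hk1
          by_cases hb : b = 0
          · have := hS4 hb (by omega) (by omega) (by omega)
            omega
          · omega
        · omega
    · -- d ≥ 2
      set D := 3*k - A with hD
      have hAD : A + D = 3*k := by omega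
      have hD2 : 2 ≤ D := by omega
      have h1 : u*A + D*u ≤ u*A + (2*b + 2*c) := by
        calc u*A + D*u = (A+D)*u := by ring
          _ = 3*k*u := by rw [hAD]
          _ ≤ u*A + (2*b + 2*c) := by omega
      have h2 : D*u ≤ 2*b + 2*c := Nat.le_of_add_le_add_left h1
      have h3 : 2*u + 2*D ≤ D*u + 4 := by
        zify
        nlinarith [mul_nonneg (by omega : (0:ℤ) ≤ (u:ℤ) - 2) (by omega : (0:ℤ) ≤ (D:ℤ) - 2)]
      constructor <;> intro hα <;> omega

end arith

section classify

lemma sym2_eq_of_mem_mem' {α : Type*} {v w : α} {e : Sym2 α} (hv : v ∈ e) (hw : w ∈ e)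
    (hne : v ≠ w) : e = s(v, w) := by
  induction e using Sym2.ind with
  | _ a b =>
    rw [Sym2.mem_iff] at hv hw
    rw [Sym2.eq_iff]
    rcases hv with rfl | rfl <;> rcases hw with rfl | rfl <;> tauto

/-- Classification of pairwise-intersecting families of edges: empty, star, or triangle. -/
lemma classify_family {W : Type*} (G : SimpleGraph W) (F : Set G.edgeSet)
    (hint : ∀ e ∈ F, ∀ f ∈ F, e = f ∨ ∃ x, x ∈ (e : Sym2 W) ∧ x ∈ (f : Sym2 W)) :
    F = ∅ ∨ (∃ w : W, ∀ e ∈ F, w ∈ (e : Sym2 W)) ∨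
      (∃ x y z : W, G.Adj x y ∧ G.Adj y z ∧ G.Adj x z ∧
        ∀ e ∈ F, (e : Sym2 W) = s(x, y) ∨ (e : Sym2 W) = s(y, z) ∨ (e : Sym2 W) = s(x, z)) := by
  rcases Set.eq_empty_or_nonempty F with hF | ⟨e₁, he₁⟩
  · exact Or.inl hF
  by_cases hstar : ∃ w : W, ∀ e ∈ F, w ∈ (e : Sym2 W)
  · exact Or.inr (Or.inl hstar)
  push_neg at hstar
  refine Or.inr (Or.inr ?_)
  obtain ⟨x, y, hadj1, hxy⟩ : ∃ x y, G.Adj x y ∧ (e₁ : Sym2 W) = s(x, y) := by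
    obtain ⟨e, he⟩ := e₁
    induction e using Sym2.ind with
    | _ x y => exact ⟨x, y, (SimpleGraph.mem_edgeSet G).mp he, rfl⟩
  have hxne : x ≠ y := G.ne_of_adj hadj1
  obtain ⟨e₂, he₂, hxe₂⟩ := hstar x
  have he₁₂ : e₁ ≠ e₂ := by
    rintro rfl
    exact hxe₂ (by rw [hxy]; simp)
  have hye₂ : y ∈ (e₂ : Sym2 W) := by
    rcases hint e₁ he₁ e₂ he₂ with h | ⟨w, hw1, hw2⟩
    · exact absurd h he₁₂
    · rw [hxy, Sym2.mem_iff] at hw1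
      rcases hw1 with rfl | rfl
      · exact absurd hw2 hxe₂
      · exact hw2
  obtain ⟨z, hz⟩ := Sym2.mem_iff_exists.mp hye₂
  have hzx : z ≠ x := by
    rintro rfl
    exact hxe₂ (by rw [hz]; simp)
  have hadj2 : G.Adj y z := by
    have := e₂.2
    rw [hz, SimpleGraph.mem_edgeSet] at this
    exact this
  have hzy : z ≠ y := fun h => G.ne_of_adj hadj2 h.symm
  obtain ⟨e₃, he₃, hye₃⟩ := hstar y
  have he₁₃ : e₁ ≠ e₃ := by
    rintro rfl
    exact hye₃ (by rw [hxy]; simp)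
  have he₂₃ : e₂ ≠ e₃ := by
    rintro rfl
    exact hye₃ (by rw [hz]; simp)
  have hxe₃ : x ∈ (e₃ : Sym2 W) := by
    rcases hint e₁ he₁ e₃ he₃ with h | ⟨w, hw1, hw2⟩
    · exact absurd h he₁₃
    · rw [hxy, Sym2.mem_iff] at hw1
      rcases hw1 with rfl | rfl
      · exact hw2
      · exact absurd hw2 hye₃
  have hze₃ : z ∈ (e₃ : Sym2 W) := by
    rcases hint e₂ he₂ e₃ he₃ with h | ⟨w, hw1, hw2⟩
    · exact absurd h he₂₃
    · rw [hz, Sym2.mem_iff] at hw1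
      rcases hw1 with rfl | rfl
      · exact absurd hw2 hye₃
      · exact hw2
  have he₃eq : (e₃ : Sym2 W) = s(x, z) := sym2_eq_of_mem_mem' hxe₃ hze₃ (Ne.symm hzx)
  have hadj3 : G.Adj x z := by
    have := e₃.2
    rw [he₃eq, SimpleGraph.mem_edgeSet] at this
    exact this
  refine ⟨x, y, z, hadj1, hadj2, hadj3, ?_⟩
  intro e he
  rcases hint e he e₁ he₁ with h | ⟨w, hw1, hw2⟩
  · exact Or.inl (by rw [h, hxy])
  rw [hxy, Sym2.mem_iff] at hw2
  rcases hw2 with rfl | rfl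
  · -- x ∈ e
    rcases hint e he e₂ he₂ with h | ⟨w', hw1', hw2'⟩
    · rw [h, hz] at hw1
      rw [Sym2.mem_iff] at hw1
      rcases hw1 with rfl | rfl
      · exact absurd rfl hxne.symm  -- x = y impossible... x ∈ e₂? handled below
      · exact absurd rfl hzx.symm
    · rw [hz, Sym2.mem_iff] at hw2'
      rcases hw2' with rfl | rfl
      · -- y ∈ e too
        exact Or.inl (sym2_eq_of_mem_mem' hw1 hw1' hxne)
      · -- z ∈ e
        exact Or.inr (Or.inr (sym2_eq_of_mem_mem' hw1 hw1' (Ne.symm hzx)))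
  · -- y ∈ e; check whether x ∈ e
    by_cases hxe : x ∈ (e : Sym2 W)
    · exact Or.inl (sym2_eq_of_mem_mem' hxe hw1 hxne)
    rcases hint e he e₃ he₃ with h | ⟨w', hw1', hw2'⟩
    · rw [h, he₃eq] at hw1
      rw [Sym2.mem_iff] at hw1
      rcases hw1 with rfl | rfl
      · exact absurd rfl hxne
      · exact Or.inr (Or.inr (by rw [h, he₃eq]))
    · rw [he₃eq, Sym2.mem_iff] at hw2'
      rcases hw2' with rfl | rfl
      · exact absurd hw1' hxe
      · exact Or.inr (Or.inl (sym2_eq_of_mem_mem' hw1 hw1' hzy.symm))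

end classify

section mtag
variable {V : Type*} [Fintype V] {H : SimpleGraph V} {k : ℕ}

/-- Classification tags for intersecting families of edges of `Hk H k`. -/
inductive MTag (V : Type*) (k : ℕ) where
  | starH (v : V)
  | starT (t : Fin k × Fin 3)
  | tri1 (bi : Fin k)
  | tri2 (v : V) (t t' : Fin k × Fin 3)
  | tri3 (u v : V) (t : Fin k × Fin 3)
  | none

/-- Specification of tags. -/
def mspec (H : SimpleGraph V) (k : ℕ) (F : Set (Hk H k).edgeSet) :
    MTag V k → Prop
  | .starH v => ∀ e ∈ F, Sum.inl v ∈ (e : Sym2 (V ⊕ Fin k × Fin 3))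
  | .starT t => ∀ e ∈ F, Sum.inr t ∈ (e : Sym2 (V ⊕ Fin k × Fin 3))
  | .tri1 bi => ∀ e ∈ F, ∀ x ∈ (e : Sym2 (V ⊕ Fin k × Fin 3)), ∃ j, x = Sum.inr (bi, j)
  | .tri2 v t t' => t.1 = t'.1 ∧ t ≠ t' ∧ ∀ e ∈ F,
      (e : Sym2 (V ⊕ Fin k × Fin 3)) = s(.inl v, .inr t) ∨
      (e : Sym2 (V ⊕ Fin k × Fin 3)) = s(.inl v, .inr t') ∨
      (e : Sym2 (V ⊕ Fin k × Fin 3)) = s(.inr t, .inr t')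
  | .tri3 u v t => H.Adj u v ∧ ∀ e ∈ F,
      (e : Sym2 (V ⊕ Fin k × Fin 3)) = s(.inl u, .inl v) ∨
      (e : Sym2 (V ⊕ Fin k × Fin 3)) = s(.inl u, .inr t) ∨
      (e : Sym2 (V ⊕ Fin k × Fin 3)) = s(.inl v, .inr t)
  | .none => F = ∅

lemma mspec_exists (htf : H.CliqueFree 3) (F : Set (Hk H k).edgeSet)
    (hint : ∀ e ∈ F, ∀ f ∈ F, e = f ∨
      ∃ x, x ∈ (e : Sym2 (V ⊕ Fin k × Fin 3)) ∧ x ∈ (f : Sym2 (V ⊕ Fin k × Fin 3))) :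
    ∃ tg, mspec H k F tg := by
  rcases classify_family (Hk H k) F hint with hF | ⟨w, hw⟩ | ⟨x, y, z, hxy, hyz, hxz, hF⟩
  · exact ⟨.none, hF⟩
  · match w with
    | .inl v => exact ⟨.starH v, hw⟩
    | .inr t => exact ⟨.starT t, hw⟩
  · match x, y, z, hxy, hyz, hxz, hF with
    | .inl a, .inl b, .inl c, hxy, hyz, hxz, hF =>
      exact absurd (is3Clique_triple_iff.mpr
        ⟨(show H.Adj a b from hxy), (show H.Adj a c from hxz), (show H.Adj b c from hyz)⟩)
        (htf {a, b, c})
    | .inl a, .inl b, .inr t, hxy, hyz, hxz, hF =>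
      refine ⟨.tri3 a b t, hxy, fun e he => ?_⟩
      rcases hF e he with h | h | h
      · exact Or.inl h
      · exact Or.inr (Or.inr h)
      · exact Or.inr (Or.inl h)
    | .inl a, .inr t, .inl b, hxy, hyz, hxz, hF =>
      refine ⟨.tri3 a b t, hxz, fun e he => ?_⟩
      rcases hF e he with h | h | h
      · exact Or.inr (Or.inl h)
      · exact Or.inr (Or.inr (h.trans (Sym2.eq_swap)))
      · exact Or.inl h
    | .inr t, .inl a, .inl b, hxy, hyz, hxz, hF =>
      refine ⟨.tri3 a b t, hyz, fun e he => ?_⟩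
      rcases hF e he with h | h | h
      · exact Or.inr (Or.inl (h.trans (Sym2.eq_swap)))
      · exact Or.inl h
      · exact Or.inr (Or.inr (h.trans (Sym2.eq_swap)))
    | .inl a, .inr t, .inr t', hxy, hyz, hxz, hF =>
      refine ⟨.tri2 a t t', hyz.1, fun h => hyz.2 (congrArg Prod.snd h), fun e he => ?_⟩
      rcases hF e he with h | h | h
      · exact Or.inl h
      · exact Or.inr (Or.inr h)
      · exact Or.inr (Or.inl h)
    | .inr t, .inl a, .inr t', hxy, hyz, hxz, hF =>
      refine ⟨.tri2 a t t', hxz.1, fun h => hxz.2 (congrArg Prod.snd h), fun e he => ?_⟩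
      rcases hF e he with h | h | h
      · exact Or.inl (h.trans (Sym2.eq_swap))
      · exact Or.inr (Or.inl h)
      · exact Or.inr (Or.inr h)
    | .inr t, .inr t', .inl a, hxy, hyz, hxz, hF =>
      refine ⟨.tri2 a t t', hxy.1, fun h => hxy.2 (congrArg Prod.snd h), fun e he => ?_⟩
      rcases hF e he with h | h | h
      · exact Or.inr (Or.inr h)
      · exact Or.inr (Or.inl (h.trans (Sym2.eq_swap)))
      · exact Or.inl (h.trans (Sym2.eq_swap))
    | .inr t, .inr t', .inr t'', hxy, hyz, hxz, hF =>
      refine ⟨.tri1 t.1, fun e he x hx => ?_⟩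
      have h1 : t'.1 = t.1 := hxy.1.symm
      have h2 : t''.1 = t.1 := hxz.1.symm
      rcases hF e he with h | h | h <;> rw [h, Sym2.mem_iff] at hx <;>
        rcases hx with rfl | rfl
      · exact ⟨t.2, rfl⟩
      · exact ⟨t'.2, by rw [← h1]⟩
      · exact ⟨t'.2, by rw [← h1]⟩
      · exact ⟨t''.2, by rw [← h2]⟩
      · exact ⟨t.2, rfl⟩
      · exact ⟨t''.2, by rw [← h2]⟩

end mtag

section counting
variable {V : Type*} [Fintype V] {H : SimpleGraph V} {k : ℕ} {m : ℕ}

/-- the join edge from `v` to `t`. -/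
def joinEdge (H : SimpleGraph V) (k : ℕ) (v : V) (t : Fin k × Fin 3) : (Hk H k).edgeSet :=
  ⟨s(Sum.inl v, Sum.inr t), by rw [SimpleGraph.mem_edgeSet]; exact Hk_adj_lr⟩

lemma join_eq_join {v w : V} {t t' : Fin k × Fin 3} :
    (s(Sum.inl v, Sum.inr t) : Sym2 (V ⊕ Fin k × Fin 3)) = s(Sum.inl w, Sum.inr t') ↔
      v = w ∧ t = t' := by
  rw [Sym2.eq_iff]
  constructor
  · rintro (⟨h1, h2⟩ | ⟨h1, h2⟩)
    · exact ⟨Sum.inl_injective h1, Sum.inr_injective h2⟩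
    · exact nomatch h1
  · rintro ⟨rfl, rfl⟩
    exact Or.inl ⟨rfl, rfl⟩

lemma join_ne_block {v : V} {t t1 t2 : Fin k × Fin 3} :
    (s(Sum.inl v, Sum.inr t) : Sym2 (V ⊕ Fin k × Fin 3)) ≠ s(Sum.inr t1, Sum.inr t2) := by
  intro h
  rw [Sym2.eq_iff] at h
  rcases h with ⟨h1, h2⟩ | ⟨h1, h2⟩ <;> exact nomatch h1

lemma join_ne_HH {v : V} {t : Fin k × Fin 3} {u w : V} :
    (s(Sum.inl v, Sum.inr t) : Sym2 (V ⊕ Fin k × Fin 3)) ≠ s(Sum.inl u, Sum.inl w) := by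
  intro h
  rw [Sym2.eq_iff] at h
  rcases h with ⟨h1, h2⟩ | ⟨h1, h2⟩ <;> exact nomatch h2

lemma count_S1v (C : (KG (Hk H k)).Coloring (Fin m)) (tag : Fin m → MTag V k)
    (tsp : ∀ i, mspec H k {e | C e = i} (tag i)) (v : V)
    (hv : ¬∃ i, tag i = MTag.starH v) :
    3 * k ≤ (Finset.univ.filter (fun i => ∃ t, tag i = MTag.starT t)).card
      + 2 * (Finset.univ.filter (fun i => ∃ t t', tag i = MTag.tri2 v t t')).card
      + (Finset.univ.filter (fun i => ∃ u w t, tag i = MTag.tri3 u w t ∧ (v = u ∨ v = w))).card := by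
  classical
  have hdom : (Finset.univ : Finset (Fin k × Fin 3)).card = 3 * k := by
    simp [Fintype.card_prod]
    ring
  have hfib := Finset.card_eq_sum_card_fiberwise
    (f := fun t : Fin k × Fin 3 => C (joinEdge H k v t)) (s := Finset.univ) (t := Finset.univ)
    (fun x _ => Finset.mem_univ _)
  have hbound : ∀ i : Fin m,
      (Finset.univ.filter (fun t : Fin k × Fin 3 => C (joinEdge H k v t) = i)).card ≤
      (if ∃ t, tag i = MTag.starT t then 1 else 0)
      + 2 * (if ∃ t t', tag i = MTag.tri2 v t t' then 1 else 0)
      + (if ∃ u w t, tag i = MTag.tri3 u w t ∧ (v = u ∨ v = w) then 1 else 0) := by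
    intro i
    have sp := tsp i
    cases htag : tag i with
    | starH v' =>
      rw [htag] at sp
      have hemp : (Finset.univ.filter (fun t : Fin k × Fin 3 => C (joinEdge H k v t) = i)) = ∅ := by
        rw [Finset.filter_eq_empty_iff]
        intro t _ heq
        have hmem := sp (joinEdge H k v t) heq
        rw [show ((joinEdge H k v t : (Hk H k).edgeSet) : Sym2 (V ⊕ Fin k × Fin 3))
          = s(Sum.inl v, Sum.inr t) from rfl, Sym2.mem_iff] at hmem
        rcases hmem with h | h
        · exact hv ⟨i, by rw [htag, Sum.inl_injective h]⟩
        · exact nomatch h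
      rw [hemp]
      simp
    | starT τ =>
      rw [htag] at sp
      have hsub : (Finset.univ.filter (fun t : Fin k × Fin 3 => C (joinEdge H k v t) = i)) ⊆ {τ} := by
        intro t ht
        rw [Finset.mem_filter] at ht
        have hmem := sp (joinEdge H k v t) ht.2
        rw [show ((joinEdge H k v t : (Hk H k).edgeSet) : Sym2 (V ⊕ Fin k × Fin 3))
          = s(Sum.inl v, Sum.inr t) from rfl, Sym2.mem_iff] at hmem
        rcases hmem with h | h
        · exact nomatch h
        · rw [Finset.mem_singleton, Sum.inr_injective h]
      have h1 : (Finset.univ.filter (fun t : Fin k × Fin 3 => C (joinEdge H k v t) = i)).card ≤ 1 := by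
        simpa using Finset.card_le_card hsub
      have hif : (if ∃ t, (MTag.starT τ : MTag V k) = MTag.starT t then 1 else 0) = 1 :=
        if_pos ⟨τ, rfl⟩
      omega
    | tri1 bi =>
      rw [htag] at sp
      have hemp : (Finset.univ.filter (fun t : Fin k × Fin 3 => C (joinEdge H k v t) = i)) = ∅ := by
        rw [Finset.filter_eq_empty_iff]
        intro t _ heq
        obtain ⟨j, hj⟩ := sp (joinEdge H k v t) heq (Sum.inl v) (by
          rw [show ((joinEdge H k v t : (Hk H k).edgeSet) : Sym2 (V ⊕ Fin k × Fin 3))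
            = s(Sum.inl v, Sum.inr t) from rfl]; simp)
        exact nomatch hj
      rw [hemp]
      simp
    | tri2 w t1 t2 =>
      rw [htag] at sp
      by_cases hwv : w = v
      · have hsub : (Finset.univ.filter (fun t : Fin k × Fin 3 => C (joinEdge H k v t) = i))
            ⊆ {t1, t2} := by
          intro t ht
          rw [Finset.mem_filter] at ht
          rcases sp.2.2 (joinEdge H k v t) ht.2 with h | h | h
          · rw [show ((joinEdge H k v t : (Hk H k).edgeSet) : Sym2 (V ⊕ Fin k × Fin 3))
              = s(Sum.inl v, Sum.inr t) from rfl, join_eq_join] at h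
            simp [h.2]
          · rw [show ((joinEdge H k v t : (Hk H k).edgeSet) : Sym2 (V ⊕ Fin k × Fin 3))
              = s(Sum.inl v, Sum.inr t) from rfl, join_eq_join] at h
            simp [h.2]
          · exact absurd h join_ne_block
        have hcard2 : ({t1, t2} : Finset (Fin k × Fin 3)).card ≤ 2 := by
          simpa using Finset.card_insert_le t1 ({t2} : Finset (Fin k × Fin 3))
        have h1 := (Finset.card_le_card hsub).trans hcard2
        have hif : (if ∃ t t', (MTag.tri2 w t1 t2 : MTag V k) = MTag.tri2 v t t' then 1 else 0) = 1 :=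
          if_pos ⟨t1, t2, by rw [hwv]⟩
        omega
      · have hemp : (Finset.univ.filter (fun t : Fin k × Fin 3 => C (joinEdge H k v t) = i)) = ∅ := by
          rw [Finset.filter_eq_empty_iff]
          intro t _ heq
          rcases sp.2.2 (joinEdge H k v t) heq with h | h | h
          · rw [show ((joinEdge H k v t : (Hk H k).edgeSet) : Sym2 (V ⊕ Fin k × Fin 3))
              = s(Sum.inl v, Sum.inr t) from rfl, join_eq_join] at h
            exact hwv h.1.symm
          · rw [show ((joinEdge H k v t : (Hk H k).edgeSet) : Sym2 (V ⊕ Fin k × Fin 3))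
              = s(Sum.inl v, Sum.inr t) from rfl, join_eq_join] at h
            exact hwv h.1.symm
          · exact absurd h join_ne_block
        rw [hemp]
        simp
    | tri3 u w t =>
      rw [htag] at sp
      by_cases hcase : v = u ∨ v = w
      · have hsub : (Finset.univ.filter (fun t' : Fin k × Fin 3 => C (joinEdge H k v t') = i))
            ⊆ {t} := by
          intro t' ht'
          rw [Finset.mem_filter] at ht'
          rcases sp.2 (joinEdge H k v t') ht'.2 with h | h | h
          · exact absurd h join_ne_HH
          · rw [show ((joinEdge H k v t' : (Hk H k).edgeSet) : Sym2 (V ⊕ Fin k × Fin 3))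
              = s(Sum.inl v, Sum.inr t') from rfl, join_eq_join] at h
            simp [h.2]
          · rw [show ((joinEdge H k v t' : (Hk H k).edgeSet) : Sym2 (V ⊕ Fin k × Fin 3))
              = s(Sum.inl v, Sum.inr t') from rfl, join_eq_join] at h
            simp [h.2]
        have h1 : (Finset.univ.filter (fun t' : Fin k × Fin 3 => C (joinEdge H k v t') = i)).card ≤ 1 := by
          simpa using Finset.card_le_card hsub
        have hif : (if ∃ u' w' t', (MTag.tri3 u w t : MTag V k) = MTag.tri3 u' w' t' ∧ (v = u' ∨ v = w')
            then 1 else 0) = 1 := if_pos ⟨u, w, t, rfl, hcase⟩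
        omega
      · push_neg at hcase
        have hemp : (Finset.univ.filter (fun t' : Fin k × Fin 3 => C (joinEdge H k v t') = i)) = ∅ := by
          rw [Finset.filter_eq_empty_iff]
          intro t' _ heq
          rcases sp.2 (joinEdge H k v t') heq with h | h | h
          · exact absurd h join_ne_HH
          · rw [show ((joinEdge H k v t' : (Hk H k).edgeSet) : Sym2 (V ⊕ Fin k × Fin 3))
              = s(Sum.inl v, Sum.inr t') from rfl, join_eq_join] at h
            exact hcase.1 h.1
          · rw [show ((joinEdge H k v t' : (Hk H k).edgeSet) : Sym2 (V ⊕ Fin k × Fin 3))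
              = s(Sum.inl v, Sum.inr t') from rfl, join_eq_join] at h
            exact hcase.2 h.1
        rw [hemp]
        simp
    | none =>
      rw [htag] at sp
      have hemp : (Finset.univ.filter (fun t : Fin k × Fin 3 => C (joinEdge H k v t) = i)) = ∅ := by
        rw [Finset.filter_eq_empty_iff]
        intro t _ heq
        have : joinEdge H k v t ∈ {e | C e = i} := heq
        rw [sp] at this
        exact this
      rw [hemp]
      simp
  calc 3 * k = (Finset.univ : Finset (Fin k × Fin 3)).card := hdom.symm
    _ = ∑ i : Fin m, (Finset.univ.filter (fun t : Fin k × Fin 3 => C (joinEdge H k v t) = i)).card := hfib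
    _ ≤ ∑ i : Fin m, ((if ∃ t, tag i = MTag.starT t then 1 else 0)
        + 2 * (if ∃ t t', tag i = MTag.tri2 v t t' then 1 else 0)
        + (if ∃ u w t, tag i = MTag.tri3 u w t ∧ (v = u ∨ v = w) then 1 else 0)) :=
        Finset.sum_le_sum (fun i _ => hbound i)
    _ = (Finset.univ.filter (fun i => ∃ t, tag i = MTag.starT t)).card
      + 2 * (Finset.univ.filter (fun i => ∃ t t', tag i = MTag.tri2 v t t')).card
      + (Finset.univ.filter (fun i => ∃ u w t, tag i = MTag.tri3 u w t ∧ (v = u ∨ v = w))).card := by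
        rw [Finset.sum_add_distrib, Finset.sum_add_distrib, ← Finset.mul_sum]
        rw [Finset.sum_boole, Finset.sum_boole, Finset.sum_boole]
        simp

end counting

section counting2
variable {V : Type*} [Fintype V] {H : SimpleGraph V} {k : ℕ} {m : ℕ}

def mk3 : Fin 3 → Fin 3 × Fin 3
  | 0 => (1, 2)
  | 1 => (0, 2)
  | 2 => (0, 1)

lemma mk3_ne : ∀ j : Fin 3, (mk3 j).1 ≠ (mk3 j).2 := by decide

lemma mk3_mem : ∀ x j : Fin 3, x ≠ j ↔ (x = (mk3 j).1 ∨ x = (mk3 j).2) := by decide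

lemma mk3_uniq : ∀ a b : Fin 3,
    (((mk3 a).1 = (mk3 b).1 ∧ (mk3 a).2 = (mk3 b).2) ∨
     ((mk3 a).1 = (mk3 b).2 ∧ (mk3 a).2 = (mk3 b).1)) → a = b := by decide

/-- the block edge of block `p.1` missing vertex `p.2`. -/
def blockEdge (H : SimpleGraph V) (k : ℕ) (p : Fin k × Fin 3) : (Hk H k).edgeSet :=
  ⟨s(Sum.inr (p.1, (mk3 p.2).1), Sum.inr (p.1, (mk3 p.2).2)), by
    rw [SimpleGraph.mem_edgeSet]
    exact Hk_adj_rr.mpr ⟨rfl, mk3_ne p.2⟩⟩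

lemma block_eq_block {a b c d : Fin k × Fin 3} :
    (s(Sum.inr a, Sum.inr b) : Sym2 (V ⊕ Fin k × Fin 3)) = s(Sum.inr c, Sum.inr d) ↔
      (a = c ∧ b = d) ∨ (a = d ∧ b = c) := by
  rw [Sym2.eq_iff]
  constructor
  · rintro (⟨h1, h2⟩ | ⟨h1, h2⟩)
    · exact Or.inl ⟨Sum.inr_injective h1, Sum.inr_injective h2⟩
    · exact Or.inr ⟨Sum.inr_injective h1, Sum.inr_injective h2⟩
  · rintro (⟨rfl, rfl⟩ | ⟨rfl, rfl⟩)
    · exact Or.inl ⟨rfl, rfl⟩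
    · exact Or.inr ⟨rfl, rfl⟩

lemma block_ne_HH {a b : Fin k × Fin 3} {u w : V} :
    (s(Sum.inr a, Sum.inr b) : Sym2 (V ⊕ Fin k × Fin 3)) ≠ s(Sum.inl u, Sum.inl w) := by
  intro h
  rw [Sym2.eq_iff] at h
  rcases h with ⟨h1, h2⟩ | ⟨h1, h2⟩ <;> exact nomatch h1

lemma count_S2 (C : (KG (Hk H k)).Coloring (Fin m)) (tag : Fin m → MTag V k)
    (tsp : ∀ i, mspec H k {e | C e = i} (tag i)) :
    3 * k ≤ 2 * (Finset.univ.filter (fun i => ∃ t, tag i = MTag.starT t)).card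
      + 3 * (Finset.univ.filter (fun i => ∃ bi, tag i = MTag.tri1 bi)).card
      + (Finset.univ.filter (fun i => ∃ v t t', tag i = MTag.tri2 v t t')).card := by
  classical
  have hdom : (Finset.univ : Finset (Fin k × Fin 3)).card = 3 * k := by
    simp [Fintype.card_prod]; ring
  have hfib := Finset.card_eq_sum_card_fiberwise
    (f := fun p : Fin k × Fin 3 => C (blockEdge H k p)) (s := Finset.univ) (t := Finset.univ)
    (fun x _ => Finset.mem_univ _)
  have hbound : ∀ i : Fin m,
      (Finset.univ.filter (fun p : Fin k × Fin 3 => C (blockEdge H k p) = i)).card ≤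
      2 * (if ∃ t, tag i = MTag.starT t then 1 else 0)
      + 3 * (if ∃ bi, tag i = MTag.tri1 bi then 1 else 0)
      + (if ∃ v t t', tag i = MTag.tri2 v t t' then 1 else 0) := by
    intro i
    have sp := tsp i
    cases htag : tag i with
    | starH v' =>
      rw [htag] at sp
      have hemp : (Finset.univ.filter (fun p : Fin k × Fin 3 => C (blockEdge H k p) = i)) = ∅ := by
        rw [Finset.filter_eq_empty_iff]
        intro p _ heq
        have hmem := sp (blockEdge H k p) heq
        rw [show ((blockEdge H k p : (Hk H k).edgeSet) : Sym2 (V ⊕ Fin k × Fin 3))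
          = s(Sum.inr (p.1, (mk3 p.2).1), Sum.inr (p.1, (mk3 p.2).2)) from rfl, Sym2.mem_iff] at hmem
        rcases hmem with h | h <;> exact nomatch h
      rw [hemp]
      simp
    | starT τ =>
      rw [htag] at sp
      have hsub : (Finset.univ.filter (fun p : Fin k × Fin 3 => C (blockEdge H k p) = i))
          ⊆ {(τ.1, (mk3 τ.2).1), (τ.1, (mk3 τ.2).2)} := by
        intro p hp
        rw [Finset.mem_filter] at hp
        have hmem := sp (blockEdge H k p) hp.2
        rw [show ((blockEdge H k p : (Hk H k).edgeSet) : Sym2 (V ⊕ Fin k × Fin 3))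
          = s(Sum.inr (p.1, (mk3 p.2).1), Sum.inr (p.1, (mk3 p.2).2)) from rfl, Sym2.mem_iff] at hmem
        have h1 : τ = (p.1, (mk3 p.2).1) ∨ τ = (p.1, (mk3 p.2).2) := by
          rcases hmem with h | h
          · exact Or.inl (Sum.inr_injective h)
          · exact Or.inr (Sum.inr_injective h)
        have hfst : p.1 = τ.1 := by
          rcases h1 with h | h <;> rw [h]
        have hsnd : τ.2 = (mk3 p.2).1 ∨ τ.2 = (mk3 p.2).2 := by
          rcases h1 with h | h
          · exact Or.inl (congrArg Prod.snd h)
          · exact Or.inr (congrArg Prod.snd h)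
        have hne : p.2 ≠ τ.2 := fun hcontra => by
          have := (mk3_mem τ.2 p.2).mpr hsnd
          exact this hcontra.symm
        have := (mk3_mem p.2 τ.2).mp hne
        rcases this with h | h
        · exact Finset.mem_insert.mpr (Or.inl (by rw [← hfst, ← h]))
        · refine Finset.mem_insert.mpr (Or.inr (Finset.mem_singleton.mpr (by rw [← hfst, ← h])))
      have h1 : (Finset.univ.filter (fun p : Fin k × Fin 3 => C (blockEdge H k p) = i)).card
          ≤ 2 := by
        refine (Finset.card_le_card hsub).trans ?_
        refine (Finset.card_insert_le _ _).trans ?_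
        simp
      have hif : (if ∃ t, (MTag.starT τ : MTag V k) = MTag.starT t then 1 else 0) = 1 :=
        if_pos ⟨τ, rfl⟩
      omega
    | tri1 bi =>
      rw [htag] at sp
      have hsub : (Finset.univ.filter (fun p : Fin k × Fin 3 => C (blockEdge H k p) = i))
          ⊆ {(bi, 0), (bi, 1), (bi, 2)} := by
        intro p hp
        rw [Finset.mem_filter] at hp
        obtain ⟨j, hj⟩ := sp (blockEdge H k p) hp.2 (Sum.inr (p.1, (mk3 p.2).1)) (by
          rw [show ((blockEdge H k p : (Hk H k).edgeSet) : Sym2 (V ⊕ Fin k × Fin 3))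
            = s(Sum.inr (p.1, (mk3 p.2).1), Sum.inr (p.1, (mk3 p.2).2)) from rfl]; simp)
        have : p.1 = bi := congrArg Prod.fst (Sum.inr_injective hj)
        have hp2 : p.2 = 0 ∨ p.2 = 1 ∨ p.2 = 2 := by
          rcases (by decide : ∀ j : Fin 3, j = 0 ∨ j = 1 ∨ j = 2) p.2 with h | h | h <;> tauto
        have hpeq : p = (bi, p.2) := by
          rw [← this]
        rcases hp2 with h | h | h <;> rw [hpeq, h] <;> simp
      have h1 : (Finset.univ.filter (fun p : Fin k × Fin 3 => C (blockEdge H k p) = i)).card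
          ≤ 3 := by
        refine (Finset.card_le_card hsub).trans ?_
        refine (Finset.card_insert_le _ _).trans ?_
        refine Nat.add_le_add_right ((Finset.card_insert_le _ _).trans ?_) 1
        simp
      have hif : (if ∃ bi', (MTag.tri1 bi : MTag V k) = MTag.tri1 bi' then 1 else 0) = 1 :=
        if_pos ⟨bi, rfl⟩
      omega
    | tri2 w t1 t2 =>
      rw [htag] at sp
      have h1 : (Finset.univ.filter (fun p : Fin k × Fin 3 => C (blockEdge H k p) = i)).card
          ≤ 1 := by
        rw [Finset.card_le_one]
        intro p hp q hq
        rw [Finset.mem_filter] at hp hq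
        have hforms : ∀ r : Fin k × Fin 3, C (blockEdge H k r) = i →
            ((r.1, (mk3 r.2).1) = t1 ∧ (r.1, (mk3 r.2).2) = t2) ∨
            ((r.1, (mk3 r.2).1) = t2 ∧ (r.1, (mk3 r.2).2) = t1) := by
          intro r hr
          rcases sp.2.2 (blockEdge H k r) hr with h | h | h
          · exact absurd h (Ne.symm join_ne_block)
          · exact absurd h (Ne.symm join_ne_block)
          · exact block_eq_block.mp h
        have hP := hforms p hp.2
        have hQ := hforms q hq.2
        have hblk : t1.1 = t2.1 := sp.1
        have hr1 : ∀ r : Fin k × Fin 3,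
            (((r.1, (mk3 r.2).1) = t1 ∧ (r.1, (mk3 r.2).2) = t2) ∨
             ((r.1, (mk3 r.2).1) = t2 ∧ (r.1, (mk3 r.2).2) = t1)) → r.1 = t1.1 := by
          rintro r (⟨h1, -⟩ | ⟨h1, -⟩)
          · exact (Prod.ext_iff.mp h1).1
          · exact ((Prod.ext_iff.mp h1).1).trans hblk.symm
        have hfst : p.1 = q.1 := (hr1 p hP).trans (hr1 q hQ).symm
        have hsnd : p.2 = q.2 := by
          apply mk3_uniq
          rcases hP with ⟨hA, hB⟩ | ⟨hA, hB⟩ <;> rcases hQ with ⟨hC, hD⟩ | ⟨hC, hD⟩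
          · exact Or.inl ⟨((Prod.ext_iff.mp hA).2).trans ((Prod.ext_iff.mp hC).2).symm,
              ((Prod.ext_iff.mp hB).2).trans ((Prod.ext_iff.mp hD).2).symm⟩
          · exact Or.inr ⟨((Prod.ext_iff.mp hA).2).trans ((Prod.ext_iff.mp hD).2).symm,
              ((Prod.ext_iff.mp hB).2).trans ((Prod.ext_iff.mp hC).2).symm⟩
          · exact Or.inr ⟨((Prod.ext_iff.mp hA).2).trans ((Prod.ext_iff.mp hD).2).symm,
              ((Prod.ext_iff.mp hB).2).trans ((Prod.ext_iff.mp hC).2).symm⟩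
          · exact Or.inl ⟨((Prod.ext_iff.mp hA).2).trans ((Prod.ext_iff.mp hC).2).symm,
              ((Prod.ext_iff.mp hB).2).trans ((Prod.ext_iff.mp hD).2).symm⟩
        exact Prod.ext hfst hsnd
      have hif : (if ∃ v t t', (MTag.tri2 w t1 t2 : MTag V k) = MTag.tri2 v t t' then 1 else 0)
          = 1 := if_pos ⟨w, t1, t2, rfl⟩
      omega
    | tri3 u w t =>
      rw [htag] at sp
      have hemp : (Finset.univ.filter (fun p : Fin k × Fin 3 => C (blockEdge H k p) = i)) = ∅ := by
        rw [Finset.filter_eq_empty_iff]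
        intro p _ heq
        rcases sp.2 (blockEdge H k p) heq with h | h | h
        · exact block_ne_HH h
        · exact (Ne.symm join_ne_block) h
        · exact (Ne.symm join_ne_block) h
      rw [hemp]
      simp
    | none =>
      rw [htag] at sp
      have hemp : (Finset.univ.filter (fun p : Fin k × Fin 3 => C (blockEdge H k p) = i)) = ∅ := by
        rw [Finset.filter_eq_empty_iff]
        intro p _ heq
        have : blockEdge H k p ∈ {e | C e = i} := heq
        rw [sp] at this
        exact this
      rw [hemp]
      simp
  calc 3 * k = (Finset.univ : Finset (Fin k × Fin 3)).card := hdom.symm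
    _ = ∑ i : Fin m, (Finset.univ.filter (fun p : Fin k × Fin 3 => C (blockEdge H k p) = i)).card :=
        hfib
    _ ≤ ∑ i : Fin m, (2 * (if ∃ t, tag i = MTag.starT t then 1 else 0)
        + 3 * (if ∃ bi, tag i = MTag.tri1 bi then 1 else 0)
        + (if ∃ v t t', tag i = MTag.tri2 v t t' then 1 else 0)) :=
        Finset.sum_le_sum (fun i _ => hbound i)
    _ = 2 * (Finset.univ.filter (fun i => ∃ t, tag i = MTag.starT t)).card
      + 3 * (Finset.univ.filter (fun i => ∃ bi, tag i = MTag.tri1 bi)).card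
      + (Finset.univ.filter (fun i => ∃ v t t', tag i = MTag.tri2 v t t')).card := by
        rw [Finset.sum_add_distrib, Finset.sum_add_distrib, ← Finset.mul_sum, ← Finset.mul_sum]
        rw [Finset.sum_boole, Finset.sum_boole, Finset.sum_boole]
        simp

end counting2

section counting3
variable {V : Type*} [Fintype V] {H : SimpleGraph V} {k : ℕ} {m : ℕ}

lemma lift_mem {e : Sym2 V} (he : e ∈ H.edgeSet) :
    Sym2.map Sum.inl e ∈ (Hk H k).edgeSet := by
  induction e using Sym2.ind with
  | _ a b =>
    rw [Sym2.map_pair_eq, SimpleGraph.mem_edgeSet]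
    exact Hk_adj_ll.mpr ((SimpleGraph.mem_edgeSet H).mp he)

lemma tri3_of_inE (C : (KG (Hk H k)).Coloring (Fin m)) (tag : Fin m → MTag V k)
    (tsp : ∀ i, mspec H k {e | C e = i} (tag i)) (UH : Finset V)
    (hUH : ∀ v ∈ UH, ¬∃ i, tag i = MTag.starH v) :
    ∀ e ∈ inE H UH, ∀ (he : e ∈ H.edgeSet),
      ∃ u w t, tag (C ⟨Sym2.map Sum.inl e, lift_mem he⟩) = MTag.tri3 u w t ∧ e = s(u, w) := by
  intro e heU he
  set E : (Hk H k).edgeSet := ⟨Sym2.map Sum.inl e, lift_mem he⟩ with hE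
  set i := C E with hi
  have hcls : E ∈ {e' | C e' = i} := rfl
  have sp := tsp i
  obtain ⟨a, b, rfl⟩ : ∃ a b, e = s(a, b) := by
    induction e using Sym2.ind with | _ a b => exact ⟨a, b, rfl⟩
  have hEab : (E : Sym2 (V ⊕ Fin k × Fin 3)) = s(Sum.inl a, Sum.inl b) :=
    Sym2.map_pair_eq Sum.inl a b
  cases htag : tag i with
  | starH w =>
    rw [htag] at sp
    have hmem := sp E hcls
    rw [hEab, Sym2.mem_iff] at hmem
    have hwab : w = a ∨ w = b := by
      rcases hmem with h | h
      · exact Or.inl (Sum.inl_injective h)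
      · exact Or.inr (Sum.inl_injective h)
    have hwU : w ∈ UH := by
      rcases hwab with rfl | rfl
      · exact (mem_inE.mp heU).2 w (by simp)
      · exact (mem_inE.mp heU).2 w (by simp)
    exact absurd ⟨i, htag⟩ (hUH w hwU)
  | starT τ =>
    rw [htag] at sp
    have hmem := sp E hcls
    rw [hEab, Sym2.mem_iff] at hmem
    rcases hmem with h | h <;> exact nomatch h
  | tri1 bi =>
    rw [htag] at sp
    obtain ⟨j, hj⟩ := sp E hcls (Sum.inl a) (by rw [hEab]; simp)
    exact nomatch hj
  | tri2 w t1 t2 =>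
    rw [htag] at sp
    rcases sp.2.2 E hcls with h | h | h
    · rw [hEab] at h; exact absurd h (Ne.symm join_ne_HH)
    · rw [hEab] at h; exact absurd h (Ne.symm join_ne_HH)
    · rw [hEab] at h; exact absurd h (Ne.symm block_ne_HH)
  | tri3 u w t =>
    rw [htag] at sp
    rcases sp.2 E hcls with h | h | h
    · rw [hEab, Sym2.eq_iff] at h
      refine ⟨u, w, t, rfl, ?_⟩
      rw [Sym2.eq_iff]
      rcases h with ⟨h1, h2⟩ | ⟨h1, h2⟩
      · exact Or.inl ⟨Sum.inl_injective h1, Sum.inl_injective h2⟩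
      · exact Or.inr ⟨Sum.inl_injective h1, Sum.inl_injective h2⟩
    · rw [hEab] at h; exact absurd h (Ne.symm join_ne_HH)
    · rw [hEab] at h; exact absurd h (Ne.symm join_ne_HH)
  | none =>
    rw [htag] at sp
    rw [sp] at hcls
    exact absurd hcls (Set.notMem_empty E)

lemma count_S3 (C : (KG (Hk H k)).Coloring (Fin m)) (tag : Fin m → MTag V k)
    (tsp : ∀ i, mspec H k {e | C e = i} (tag i)) (UH : Finset V)
    (hUH : ∀ v ∈ UH, ¬∃ i, tag i = MTag.starH v) :
    (inE H UH).card ≤ (Finset.univ.filter (fun i => ∃ u w t, tag i = MTag.tri3 u w t)).card := by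
  classical
  rcases Finset.eq_empty_or_nonempty (inE H UH) with hemp | ⟨e₀, he₀⟩
  · simp [hemp]
  have hkey : ∀ e ∈ inE H UH, ∃ i u w t, tag i = MTag.tri3 u w t ∧ e = s(u, w) := by
    intro e he
    have heE : e ∈ H.edgeSet := by
      have := (mem_inE.mp he).1
      rwa [SimpleGraph.mem_edgeFinset] at this
    obtain ⟨u, w, t, h1, h2⟩ := tri3_of_inE C tag tsp UH hUH e he heE
    exact ⟨_, u, w, t, h1, h2⟩
  obtain ⟨i₀, -⟩ := hkey e₀ he₀
  set ψ : Sym2 V → Fin m := fun e =>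
    if h : ∃ i u w t, tag i = MTag.tri3 u w t ∧ e = s(u, w) then h.choose else i₀ with hψ
  have hψ1 : ∀ e ∈ inE H UH, ∃ u w t, tag (ψ e) = MTag.tri3 u w t ∧ e = s(u, w) := by
    intro e he
    have h := hkey e he
    rw [hψ]
    simp only [dif_pos h]
    exact h.choose_spec
  apply Finset.card_le_card_of_injOn ψ
  · intro e he
    obtain ⟨u, w, t, h1, -⟩ := hψ1 e he
    exact Finset.mem_filter.mpr ⟨Finset.mem_univ _, u, w, t, h1⟩
  · intro e he f hf hef
    obtain ⟨u, w, t, h1, h2⟩ := hψ1 e he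
    obtain ⟨u', w', t', h1', h2'⟩ := hψ1 f hf
    rw [hef] at h1
    rw [h1] at h1'
    injection h1' with hu hw ht
    rw [h2, h2', hu, hw]

lemma count_S4 (hconn : H.Connected) (htf : H.CliqueFree 3) (hα2 : 2 ≤ _root_.indepNum H)
    (C : (KG (Hk H k)).Coloring (Fin m)) (tag : Fin m → MTag V k)
    (tsp : ∀ i, mspec H k {e | C e = i} (tag i)) (UH : Finset V)
    (hUH : ∀ v ∈ UH, ¬∃ i, tag i = MTag.starH v)
    (ts : Fin k × Fin 3) (hts : ¬∃ i, tag i = MTag.starT ts)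
    (hb : (Finset.univ.filter (fun i => ∃ v t t', tag i = MTag.tri2 v t t')) = ∅) :
    UH.card + 1 ≤
      (Finset.univ.filter (fun i => ∃ u w t, tag i = MTag.tri3 u w t)).card + _root_.indepNum H := by
  classical
  have hassign : ∀ v ∈ UH, ∃ u w t, tag (C (joinEdge H k v ts)) = MTag.tri3 u w t ∧
      (v = u ∨ v = w) ∧ H.Adj u w := by
    intro v hv
    set i := C (joinEdge H k v ts) with hi
    have hcls : joinEdge H k v ts ∈ {e' | C e' = i} := rfl
    have sp := tsp i
    cases htag : tag i with
    | starH w =>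
      rw [htag] at sp
      have hmem := sp _ hcls
      rw [show ((joinEdge H k v ts : (Hk H k).edgeSet) : Sym2 (V ⊕ Fin k × Fin 3))
        = s(Sum.inl v, Sum.inr ts) from rfl, Sym2.mem_iff] at hmem
      rcases hmem with h | h
      · exact absurd ⟨i, by rw [htag, Sum.inl_injective h]⟩ (hUH v hv)
      · exact nomatch h
    | starT τ =>
      rw [htag] at sp
      have hmem := sp _ hcls
      rw [show ((joinEdge H k v ts : (Hk H k).edgeSet) : Sym2 (V ⊕ Fin k × Fin 3))
        = s(Sum.inl v, Sum.inr ts) from rfl, Sym2.mem_iff] at hmem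
      rcases hmem with h | h
      · exact nomatch h
      · exact absurd ⟨i, by rw [htag, Sum.inr_injective h]⟩ hts
    | tri1 bi =>
      rw [htag] at sp
      obtain ⟨j, hj⟩ := sp _ hcls (Sum.inl v) (by
        rw [show ((joinEdge H k v ts : (Hk H k).edgeSet) : Sym2 (V ⊕ Fin k × Fin 3))
          = s(Sum.inl v, Sum.inr ts) from rfl]; simp)
      exact nomatch hj
    | tri2 w t1 t2 =>
      have : i ∈ Finset.univ.filter (fun i => ∃ v t t', tag i = MTag.tri2 v t t') :=
        Finset.mem_filter.mpr ⟨Finset.mem_univ _, w, t1, t2, htag⟩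
      rw [hb] at this
      exact absurd this (Finset.notMem_empty i)
    | tri3 u w t =>
      rw [htag] at sp
      rcases sp.2 _ hcls with h | h | h
      · rw [show ((joinEdge H k v ts : (Hk H k).edgeSet) : Sym2 (V ⊕ Fin k × Fin 3))
          = s(Sum.inl v, Sum.inr ts) from rfl] at h
        exact absurd h join_ne_HH
      · rw [show ((joinEdge H k v ts : (Hk H k).edgeSet) : Sym2 (V ⊕ Fin k × Fin 3))
          = s(Sum.inl v, Sum.inr ts) from rfl, join_eq_join] at h
        exact ⟨u, w, t, rfl, Or.inl h.1, sp.1⟩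
      · rw [show ((joinEdge H k v ts : (Hk H k).edgeSet) : Sym2 (V ⊕ Fin k × Fin 3))
          = s(Sum.inl v, Sum.inr ts) from rfl, join_eq_join] at h
        exact ⟨u, w, t, rfl, Or.inr h.1, sp.1⟩
    | none =>
      rw [htag] at sp
      rw [sp] at hcls
      exact absurd hcls (Set.notMem_empty _)
  have hPex : ∀ v ∈ UH, ∃ e : Sym2 V, (v ∈ e ∧ e ∈ H.edgeFinset) ∧
      ∃ i u w t, tag i = MTag.tri3 u w t ∧ e = s(u, w) := by
    intro v hv
    obtain ⟨u, w, t, h1, h2, h3⟩ := hassign v hv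
    refine ⟨s(u, w), ⟨?_, ?_⟩, _, u, w, t, h1, rfl⟩
    · rw [Sym2.mem_iff]; exact h2
    · rw [SimpleGraph.mem_edgeFinset, SimpleGraph.mem_edgeSet]; exact h3
  set ev : V → Sym2 V := fun v =>
    if h : ∃ e : Sym2 V, (v ∈ e ∧ e ∈ H.edgeFinset) ∧
        ∃ i u w t, tag i = MTag.tri3 u w t ∧ e = s(u, w) then h.choose else s(v, v) with hev_def
  have hev : ∀ v ∈ UH, (v ∈ ev v ∧ ev v ∈ H.edgeFinset) ∧
      ∃ i u w t, tag i = MTag.tri3 u w t ∧ ev v = s(u, w) := by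
    intro v hv
    have h := hPex v hv
    rw [hev_def]
    simp only [dif_pos h]
    exact h.choose_spec
  set E' : Finset (Sym2 V) := inE H UH ∪ UH.image ev with hE'
  have hcover := coverR hconn htf hα2 UH E' ?_ ?_ ?_
  · -- |E'| ≤ c
    have hkey : ∀ e ∈ E', ∃ i u w t, tag i = MTag.tri3 u w t ∧ e = s(u, w) := by
      intro e he
      rw [hE', Finset.mem_union] at he
      rcases he with he | he
      · have heE : e ∈ H.edgeSet := by
          have := (mem_inE.mp he).1
          rwa [SimpleGraph.mem_edgeFinset] at this
        obtain ⟨u, w, t, h1, h2⟩ := tri3_of_inE C tag tsp UH hUH e he heE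
        exact ⟨_, u, w, t, h1, h2⟩
      · rw [Finset.mem_image] at he
        obtain ⟨v, hv, rfl⟩ := he
        exact (hev v hv).2
    have hcard : E'.card ≤
        (Finset.univ.filter (fun i => ∃ u w t, tag i = MTag.tri3 u w t)).card := by
      rcases Finset.eq_empty_or_nonempty E' with hemp | ⟨e₀, he₀⟩
      · simp [hemp]
      obtain ⟨i₀, -⟩ := hkey e₀ he₀
      set ψ : Sym2 V → Fin m := fun e =>
        if h : ∃ i u w t, tag i = MTag.tri3 u w t ∧ e = s(u, w) then h.choose else i₀ with hψ
      have hψ1 : ∀ e ∈ E', ∃ u w t, tag (ψ e) = MTag.tri3 u w t ∧ e = s(u, w) := by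
        intro e he
        have h := hkey e he
        rw [hψ]
        simp only [dif_pos h]
        exact h.choose_spec
      apply Finset.card_le_card_of_injOn ψ
      · intro e he
        obtain ⟨u, w, t, h1, -⟩ := hψ1 e he
        exact Finset.mem_filter.mpr ⟨Finset.mem_univ _, u, w, t, h1⟩
      · intro e he f hf hef
        obtain ⟨u, w, t, h1, h2⟩ := hψ1 e he
        obtain ⟨u', w', t', h1', h2'⟩ := hψ1 f hf
        rw [hef] at h1
        rw [h1] at h1'
        injection h1' with hu hw ht
        rw [h2, h2', hu, hw]
    omega
  · -- E' ⊆ edgeFinset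
    rw [hE']
    intro e he
    rw [Finset.mem_union] at he
    rcases he with he | he
    · exact (mem_inE.mp he).1
    · rw [Finset.mem_image] at he
      obtain ⟨v, hv, rfl⟩ := he
      exact (hev v hv).1.2
  · -- covers UH
    intro v hv
    exact ⟨ev v, by rw [hE']; exact Finset.mem_union_right _ (Finset.mem_image_of_mem _ hv),
      (hev v hv).1.1⟩
  · -- inE ⊆ E'
    rw [hE']
    exact Finset.subset_union_left

end counting3

section master
variable {V : Type*} [Fintype V] {H : SimpleGraph V} {k : ℕ}

lemma chrom_lower_main (hconn : H.Connected) (htf : H.CliqueFree 3) (hk : 1 ≤ k)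
    {m : ℕ} (hcol : (KG (Hk H k)).Colorable m) :
    (_root_.indepNum H ≤ k → Fintype.card V + k ≤ m) ∧
    (k < _root_.indepNum H → Fintype.card V + 2 * k + 1 ≤ m + _root_.indepNum H) := by
  classical
  obtain ⟨C⟩ := hcol
  have hint : ∀ i : Fin m, ∀ e ∈ {e | C e = i}, ∀ f ∈ {e | C e = i}, e = f ∨
      ∃ x, x ∈ (e : Sym2 (V ⊕ Fin k × Fin 3)) ∧ x ∈ (f : Sym2 (V ⊕ Fin k × Fin 3)) := by
    intro i e he f hf
    by_cases hef : e = f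
    · exact Or.inl hef
    right
    by_contra hno
    push_neg at hno
    have hadj : (KG (Hk H k)).Adj e f := ⟨hef, fun x hx hxf => hno x hx hxf⟩
    exact C.valid hadj (Set.mem_setOf_eq ▸ he |>.trans (Set.mem_setOf_eq ▸ hf).symm)
  set tag : Fin m → MTag V k := fun i => (mspec_exists htf {e | C e = i} (hint i)).choose
    with htag_def
  have tsp : ∀ i, mspec H k {e | C e = i} (tag i) := fun i =>
    (mspec_exists htf {e | C e = i} (hint i)).choose_spec
  set sF := Finset.univ.filter (fun i => ∃ v, tag i = MTag.starH v) with hsF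
  set AF := Finset.univ.filter (fun i => ∃ t, tag i = MTag.starT t) with hAF
  set aF := Finset.univ.filter (fun i => ∃ bi, tag i = MTag.tri1 bi) with haF
  set bF := Finset.univ.filter (fun i => ∃ v t t', tag i = MTag.tri2 v t t') with hbF
  set cF := Finset.univ.filter (fun i => ∃ u w t, tag i = MTag.tri3 u w t) with hcF
  -- m bounds the number of classes
  have hsum : sF.card + AF.card + aF.card + bF.card + cF.card ≤ m := by
    have d1 : Disjoint sF AF := by
      rw [Finset.disjoint_left]
      rintro i hi hj
      rw [hsF, Finset.mem_filter] at hi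
      rw [hAF, Finset.mem_filter] at hj
      obtain ⟨-, v, hv⟩ := hi
      obtain ⟨-, t, ht⟩ := hj
      exact nomatch (hv.symm.trans ht)
    have d2 : Disjoint (sF ∪ AF) aF := by
      rw [Finset.disjoint_left]
      rintro i hi hj
      rw [haF, Finset.mem_filter] at hj
      obtain ⟨-, bi, hbi⟩ := hj
      rw [Finset.mem_union] at hi
      rcases hi with hi | hi
      · rw [hsF, Finset.mem_filter] at hi
        obtain ⟨-, v, hv⟩ := hi
        exact nomatch (hv.symm.trans hbi)
      · rw [hAF, Finset.mem_filter] at hi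
        obtain ⟨-, t, ht⟩ := hi
        exact nomatch (ht.symm.trans hbi)
    have d3 : Disjoint ((sF ∪ AF) ∪ aF) bF := by
      rw [Finset.disjoint_left]
      rintro i hi hj
      rw [hbF, Finset.mem_filter] at hj
      obtain ⟨-, v, t, t', hv⟩ := hj
      rw [Finset.mem_union, Finset.mem_union] at hi
      rcases hi with (hi | hi) | hi
      · rw [hsF, Finset.mem_filter] at hi
        obtain ⟨-, v', hv'⟩ := hi
        exact nomatch (hv'.symm.trans hv)
      · rw [hAF, Finset.mem_filter] at hi
        obtain ⟨-, t'', ht⟩ := hi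
        exact nomatch (ht.symm.trans hv)
      · rw [haF, Finset.mem_filter] at hi
        obtain ⟨-, bi, hbi⟩ := hi
        exact nomatch (hbi.symm.trans hv)
    have d4 : Disjoint (((sF ∪ AF) ∪ aF) ∪ bF) cF := by
      rw [Finset.disjoint_left]
      rintro i hi hj
      rw [hcF, Finset.mem_filter] at hj
      obtain ⟨-, u, w, t, hu⟩ := hj
      rw [Finset.mem_union, Finset.mem_union, Finset.mem_union] at hi
      rcases hi with ((hi | hi) | hi) | hi
      · rw [hsF, Finset.mem_filter] at hi
        obtain ⟨-, v', hv'⟩ := hi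
        exact nomatch (hv'.symm.trans hu)
      · rw [hAF, Finset.mem_filter] at hi
        obtain ⟨-, t'', ht⟩ := hi
        exact nomatch (ht.symm.trans hu)
      · rw [haF, Finset.mem_filter] at hi
        obtain ⟨-, bi, hbi⟩ := hi
        exact nomatch (hbi.symm.trans hu)
      · rw [hbF, Finset.mem_filter] at hi
        obtain ⟨-, v', t1, t2, hv'⟩ := hi
        exact nomatch (hv'.symm.trans hu)
    calc sF.card + AF.card + aF.card + bF.card + cF.card
        = ((((sF ∪ AF) ∪ aF) ∪ bF) ∪ cF).card := by
          rw [Finset.card_union_of_disjoint d4, Finset.card_union_of_disjoint d3,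
            Finset.card_union_of_disjoint d2, Finset.card_union_of_disjoint d1]
      _ ≤ (Finset.univ : Finset (Fin m)).card := Finset.card_le_card (Finset.subset_univ _)
      _ = m := by simp
  set centersH := Finset.univ.filter (fun v : V => ∃ i, tag i = MTag.starH v) with hcentersH
  set UH := Finset.univ \ centersH with hUHdef
  have hUHprop : ∀ v ∈ UH, ¬∃ i, tag i = MTag.starH v := by
    intro v hv
    rw [hUHdef, Finset.mem_sdiff] at hv
    intro h
    exact hv.2 (by rw [hcentersH]; exact Finset.mem_filter.mpr ⟨Finset.mem_univ _, h⟩)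
  have hn : centersH.card + UH.card = Fintype.card V := by
    rw [hUHdef, Finset.card_sdiff_of_subset (Finset.subset_univ _)]
    have := Finset.card_le_card (Finset.subset_univ centersH)
    rw [Finset.card_univ] at this ⊢
    omega
  -- centers are at most the H-star classes
  have hσ : centersH.card ≤ sF.card := by
    rcases Finset.eq_empty_or_nonempty centersH with hemp | ⟨v₀, hv₀⟩
    · simp [hemp]
    rw [hcentersH, Finset.mem_filter] at hv₀
    obtain ⟨-, i₀, -⟩ := hv₀
    set g : V → Fin m := fun v => if h : ∃ i, tag i = MTag.starH v then h.choose else i₀ with hg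
    apply Finset.card_le_card_of_injOn g
    · intro v hv
      rw [Finset.mem_coe, Finset.mem_filter] at hv
      rw [hg]
      simp only [dif_pos hv.2]
      exact Finset.mem_filter.mpr ⟨Finset.mem_univ _, v, hv.2.choose_spec⟩
    · intro v hv w hw hvw
      rw [Finset.mem_coe, hcentersH, Finset.mem_filter] at hv hw
      rw [hg] at hvw
      simp only [dif_pos hv.2, dif_pos hw.2] at hvw
      have h1 := hv.2.choose_spec
      have h2 := hw.2.choose_spec
      rw [hvw] at h1
      rw [h1] at h2
      injection h2
  -- S1 summed over UH
  have hS1 : 3 * k * UH.card ≤ UH.card * AF.card + 2 * bF.card + 2 * cF.card := by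
    have hperv := fun (v : V) (hv : v ∈ UH) => count_S1v C tag tsp v (hUHprop v hv)
    have hstep : ∑ v ∈ UH, (3 * k) ≤
        ∑ v ∈ UH, ((Finset.univ.filter (fun i => ∃ t, tag i = MTag.starT t)).card
          + 2 * (Finset.univ.filter (fun i => ∃ t t', tag i = MTag.tri2 v t t')).card
          + (Finset.univ.filter
              (fun i => ∃ u w t, tag i = MTag.tri3 u w t ∧ (v = u ∨ v = w))).card) :=
      Finset.sum_le_sum hperv
    rw [Finset.sum_const, smul_eq_mul] at hstep
    have hsplit : ∑ v ∈ UH, ((Finset.univ.filter (fun i => ∃ t, tag i = MTag.starT t)).card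
          + 2 * (Finset.univ.filter (fun i => ∃ t t', tag i = MTag.tri2 v t t')).card
          + (Finset.univ.filter
              (fun i => ∃ u w t, tag i = MTag.tri3 u w t ∧ (v = u ∨ v = w))).card)
        = UH.card * AF.card
          + 2 * (∑ v ∈ UH, (Finset.univ.filter (fun i => ∃ t t', tag i = MTag.tri2 v t t')).card)
          + (∑ v ∈ UH, (Finset.univ.filter
              (fun i => ∃ u w t, tag i = MTag.tri3 u w t ∧ (v = u ∨ v = w))).card) := by
      rw [Finset.sum_add_distrib, Finset.sum_add_distrib, Finset.sum_const, smul_eq_mul,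
        ← Finset.mul_sum, hAF]
    -- bound the tri2 part
    have hbsum : ∑ v ∈ UH, (Finset.univ.filter (fun i => ∃ t t', tag i = MTag.tri2 v t t')).card
        ≤ bF.card := by
      have hdisj : ∀ v ∈ UH, ∀ w ∈ UH, v ≠ w →
          Disjoint (Finset.univ.filter (fun i => ∃ t t', tag i = MTag.tri2 v t t'))
            (Finset.univ.filter (fun i => ∃ t t', tag i = MTag.tri2 w t t')) := by
        intro v _ w _ hvw
        rw [Finset.disjoint_left]
        rintro i hi hj
        rw [Finset.mem_filter] at hi hj
        obtain ⟨-, t1, t2, h1⟩ := hi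
        obtain ⟨-, t3, t4, h2⟩ := hj
        rw [h1] at h2
        injection h2 with h3 h4 h5
        exact hvw h3
      rw [← Finset.card_biUnion hdisj]
      apply Finset.card_le_card
      intro i hi
      rw [Finset.mem_biUnion] at hi
      obtain ⟨v, -, hv⟩ := hi
      rw [Finset.mem_filter] at hv
      obtain ⟨-, t1, t2, h1⟩ := hv
      rw [hbF]
      exact Finset.mem_filter.mpr ⟨Finset.mem_univ _, v, t1, t2, h1⟩
    -- bound the tri3 part by double counting
    have hcsum : ∑ v ∈ UH, (Finset.univ.filter
        (fun i => ∃ u w t, tag i = MTag.tri3 u w t ∧ (v = u ∨ v = w))).card ≤ 2 * cF.card := by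
      have hswap : ∑ v ∈ UH, (Finset.univ.filter
          (fun i => ∃ u w t, tag i = MTag.tri3 u w t ∧ (v = u ∨ v = w))).card
          = ∑ i : Fin m, (UH.filter
            (fun v => ∃ u w t, tag i = MTag.tri3 u w t ∧ (v = u ∨ v = w))).card := by
        have h1 : ∀ v, (Finset.univ.filter
            (fun i => ∃ u w t, tag i = MTag.tri3 u w t ∧ (v = u ∨ v = w))).card
            = ∑ i : Fin m, if (∃ u w t, tag i = MTag.tri3 u w t ∧ (v = u ∨ v = w))
              then 1 else 0 := fun v => Finset.card_filter _ _
        have h2 : ∀ i : Fin m, (UH.filter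
            (fun v => ∃ u w t, tag i = MTag.tri3 u w t ∧ (v = u ∨ v = w))).card
            = ∑ v ∈ UH, if (∃ u w t, tag i = MTag.tri3 u w t ∧ (v = u ∨ v = w))
              then 1 else 0 := fun i => Finset.card_filter _ _
        simp_rw [h1, h2]
        exact Finset.sum_comm
      rw [hswap]
      have hboundi : ∀ i : Fin m, (UH.filter
          (fun v => ∃ u w t, tag i = MTag.tri3 u w t ∧ (v = u ∨ v = w))).card
          ≤ 2 * (if ∃ u w t, tag i = MTag.tri3 u w t then 1 else 0) := by
        intro i
        by_cases h : ∃ u w t, tag i = MTag.tri3 u w t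
        · obtain ⟨u, w, t, htag⟩ := h
          have hsub : UH.filter
              (fun v => ∃ u' w' t', tag i = MTag.tri3 u' w' t' ∧ (v = u' ∨ v = w')) ⊆ {u, w} := by
            intro v hv
            rw [Finset.mem_filter] at hv
            obtain ⟨-, u', w', t', h1, h2⟩ := hv
            rw [htag] at h1
            injection h1 with h3 h4 h5
            rw [Finset.mem_insert, Finset.mem_singleton]
            rcases h2 with rfl | rfl
            · exact Or.inl h3.symm
            · exact Or.inr h4.symm
          have h2 : ({u, w} : Finset V).card ≤ 2 := by
            simpa using Finset.card_insert_le u ({w} : Finset V)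
          have := (Finset.card_le_card hsub).trans h2
          rw [if_pos ⟨u, w, t, htag⟩]
          omega
        · have hemp : UH.filter
              (fun v => ∃ u' w' t', tag i = MTag.tri3 u' w' t' ∧ (v = u' ∨ v = w')) = ∅ := by
            rw [Finset.filter_eq_empty_iff]
            intro v _ hcontra
            obtain ⟨u', w', t', h1, -⟩ := hcontra
            exact h ⟨u', w', t', h1⟩
          rw [hemp]
          simp
      calc ∑ i : Fin m, (UH.filter
            (fun v => ∃ u w t, tag i = MTag.tri3 u w t ∧ (v = u ∨ v = w))).card
          ≤ ∑ i : Fin m, 2 * (if ∃ u w t, tag i = MTag.tri3 u w t then 1 else 0) :=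
            Finset.sum_le_sum (fun i _ => hboundi i)
        _ = 2 * cF.card := by
            rw [← Finset.mul_sum, Finset.sum_boole, hcF]
            simp
    calc 3 * k * UH.card = UH.card * (3 * k) := by ring
      _ ≤ UH.card * AF.card
          + 2 * (∑ v ∈ UH, (Finset.univ.filter (fun i => ∃ t t', tag i = MTag.tri2 v t t')).card)
          + (∑ v ∈ UH, (Finset.univ.filter
              (fun i => ∃ u w t, tag i = MTag.tri3 u w t ∧ (v = u ∨ v = w))).card) := by
          rw [hsplit] at hstep
          exact hstep
      _ ≤ UH.card * AF.card + 2 * bF.card + 2 * cF.card :=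
          Nat.add_le_add (Nat.add_le_add le_rfl (Nat.mul_le_mul_left 2 hbsum)) hcsum
  -- S2
  have hS2 : 3 * k ≤ 2 * AF.card + 3 * aF.card + bF.card := count_S2 C tag tsp
  -- S3
  have hS3 : UH.card ≤ cF.card + _root_.indepNum H := by
    have h1 := greedy_indep H UH
    have h2 := count_S3 C tag tsp UH hUHprop
    rw [← hcF] at h2
    omega
  -- S4
  have hS4 : bF.card = 0 → AF.card < 3 * k → 1 ≤ UH.card → 2 ≤ _root_.indepNum H →
      UH.card + 1 ≤ cF.card + _root_.indepNum H := by
    intro hb hA hu hα2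
    have hbemp : bF = ∅ := Finset.card_eq_zero.mp hb
    -- find a non-starred triangle vertex
    have hcT : (Finset.univ.filter (fun t : Fin k × Fin 3 => ∃ i, tag i = MTag.starT t)).card
        ≤ AF.card := by
      rcases Finset.eq_empty_or_nonempty
        (Finset.univ.filter (fun t : Fin k × Fin 3 => ∃ i, tag i = MTag.starT t)) with
        hemp | ⟨t₀, ht₀⟩
      · simp [hemp]
      rw [Finset.mem_filter] at ht₀
      obtain ⟨-, i₀, -⟩ := ht₀
      set g : Fin k × Fin 3 → Fin m := fun t =>
        if h : ∃ i, tag i = MTag.starT t then h.choose else i₀ with hg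
      apply Finset.card_le_card_of_injOn g
      · intro t ht
        rw [Finset.mem_coe, Finset.mem_filter] at ht
        rw [hg]
        simp only [dif_pos ht.2]
        rw [hAF]
        exact Finset.mem_filter.mpr ⟨Finset.mem_univ _, t, ht.2.choose_spec⟩
      · intro t ht t' ht' htt
        rw [Finset.mem_coe, Finset.mem_filter] at ht ht'
        rw [hg] at htt
        simp only [dif_pos ht.2, dif_pos ht'.2] at htt
        have h1 := ht.2.choose_spec
        have h2 := ht'.2.choose_spec
        rw [htt] at h1
        rw [h1] at h2
        injection h2
    have hts : ∃ ts : Fin k × Fin 3, ¬∃ i, tag i = MTag.starT ts := by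
      by_contra hno
      push_neg at hno
      have : (Finset.univ : Finset (Fin k × Fin 3)) ⊆
          Finset.univ.filter (fun t => ∃ i, tag i = MTag.starT t) := by
        intro t _
        exact Finset.mem_filter.mpr ⟨Finset.mem_univ _, hno t⟩
      have hcard := Finset.card_le_card this
      have : (Finset.univ : Finset (Fin k × Fin 3)).card = 3 * k := by
        simp [Fintype.card_prod]; ring
      omega
    obtain ⟨ts, hts⟩ := hts
    have hUHne : 1 ≤ UH.card := hu
    have := count_S4 hconn htf hα2 C tag tsp UH hUHprop ts hts (by rw [← hbF]; exact hbemp)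
    rw [← hcF] at this
    omega
  -- conclude with the arithmetic lemma
  have hmain := arith_core (Fintype.card V) k (_root_.indepNum H) UH.card AF.card aF.card bF.card cF.card
    m hk (by omega)
    (by
      have : Fintype.card V - UH.card = centersH.card := by omega
      omega)
    hS1 hS2 hS3 hS4
  exact hmain

end master

/-- For a connected triangle-free graph `H` with at least one edge, the chromatic number of
the complement of the line graph of the join `Hk H k` of `H` with `k` disjoint triangles
equals the 2-colorability defect of `Hk H k` if and only if the independence number of `H`
is at most `k`. -/
theorem chromNum_KG_Hk_eq_cd2_iff {V : Type*} [Fintype V] (H : SimpleGraph V)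
    (hconn : H.Connected) (htf : H.CliqueFree 3) (hE : H.edgeSet.Nonempty)
    (k : ℕ) (hk : 1 ≤ k) :
    chromNum (KG (Hk H k)) = cd2 (Hk H k) ↔ _root_.indepNum H ≤ k := by
  classical
  have hne : {m | (KG (Hk H k)).Colorable m}.Nonempty :=
    ⟨Fintype.card (Hk H k).edgeSet, SimpleGraph.colorable_of_fintype _⟩
  have hmem : (KG (Hk H k)).Colorable (chromNum (KG (Hk H k))) := Nat.sInf_mem hne
  have hlow := chrom_lower_main hconn htf hk hmem
  have hup := chrom_upper (H := H) (k := k)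
  constructor
  · intro heq
    by_contra hgt
    push_neg at hgt
    have h1 := hlow.2 hgt
    have h2 := cd2_le_two (H := H) (k := k)
    rw [heq] at h1
    omega
  · intro hα
    have h1 := hlow.1 hα
    have h2 := cd2_lower hα
    have h3 := cd2_le_one (H := H) (k := k)
    omega
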